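/- arXiv:2112.10141 — 5 statements merged into one kernel-verified Lean document; each statement's English description precedes it below -/
import Mathlib

section
/- Let X be a CAT(0) cubical complex and let ĥ, k̂ be two hyperplanes whose distance in the contact graph CX is at least 3. Then ĥ and k̂ are strongly separated, i.e. they are parallel and no hyperplane of X is transverse to both. -/
/-!
A combinatorial model of a finite-dimensional CAT(0) cubical complex:
the vertex set `V` together with its collection of half-spaces `HS ⊆ Set V`,
axiomatized as a pocset of subsets of `V` whose dual (Sageev) complex has
vertex set exactly `V`.
-/

open Set

variable {V : Type*}

/-- Two half-spaces are transverse if all four corner intersections are nonempty. -/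
def Transverse (h k : Set V) : Prop :=
  (h ∩ k).Nonempty ∧ (hᶜ ∩ k).Nonempty ∧ (h ∩ kᶜ).Nonempty ∧ (hᶜ ∩ kᶜ).Nonempty

lemma Transverse.symm {h k : Set V} (t : Transverse h k) : Transverse k h := by
  obtain ⟨a, b, c, d⟩ := t
  refine ⟨?_, ?_, ?_, ?_⟩ <;> rw [Set.inter_comm] <;> assumption

/-- `h` and `k` bound the same hyperplane (they are equal or complementary). -/
def SameHyp (h k : Set V) : Prop := k = h ∨ k = hᶜ

lemma SameHyp.symm {h k : Set V} (s : SameHyp h k) : SameHyp k h := by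
  rcases s with rfl | rfl
  · exact Or.inl rfl
  · exact Or.inr (compl_compl h).symm

/-- A model of a finite-dimensional CAT(0) cubical complex with vertex set `V`. -/
structure CubicalCpx (V : Type*) where
  /-- the collection of half-spaces -/
  HS : Set (Set V)
  compl_mem : ∀ h ∈ HS, hᶜ ∈ HS
  proper : ∀ h ∈ HS, h.Nonempty ∧ hᶜ.Nonempty
  /-- finitely many hyperplanes separate two vertices -/
  finite_sep : ∀ x y : V, {h ∈ HS | x ∈ h ∧ y ∉ h}.Finite
  /-- distinct vertices are separated by a hyperplane -/
  sep : ∀ x y : V, x ≠ y → ∃ h ∈ HS, x ∈ h ∧ y ∉ h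
  /-- finite dimensionality: a bound on families of pairwise transverse hyperplanes -/
  dim : ℕ
  finite_dim : ∀ T : Finset (Set V), ↑T ⊆ HS →
    (∀ h ∈ T, ∀ k ∈ T, h ≠ k → Transverse h k) → T.card ≤ dim
  /-- every consistent total orientation satisfying the descending chain condition
  is the ultrafilter of half-spaces of an actual vertex (Sageev--Roller duality) -/
  realized : ∀ ω : Set (Set V), ω ⊆ HS →
    (∀ h ∈ HS, h ∈ ω ↔ hᶜ ∉ ω) →
    (∀ h ∈ ω, ∀ k ∈ ω, (h ∩ k).Nonempty) →
    (∀ f : ℕ → Set V, (∀ n, f n ∈ ω) → (∀ n, f (n + 1) ⊆ f n) → ∃ n, f (n + 1) = f n) →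
    ∃ x : V, ω = {h ∈ HS | x ∈ h}

namespace CubicalCpx

variable (C : CubicalCpx V)

/-- `h ⊊ k` tightly nested: no half-space of the complex lies properly between them. -/
def TightlyNested (h k : Set V) : Prop :=
  h ⊂ k ∧ ∀ l ∈ C.HS, h ⊆ l → l ⊆ k → l = h ∨ l = k

/-- tightly nested up to a choice of orientations of the two hyperplanes -/
def TightContact (h k : Set V) : Prop :=
  ∃ h' k', SameHyp h h' ∧ SameHyp k k' ∧ C.TightlyNested h' k'

/-- Two half-spaces (hyperplanes) are strongly separated if they are parallel
(not transverse) and no hyperplane of the complex is transverse to both. -/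
def StronglySeparated (h k : Set V) : Prop :=
  ¬ Transverse h k ∧ ∀ l ∈ C.HS, ¬ (Transverse l h ∧ Transverse l k)

/-- The contact graph: vertices are the hyperplanes of `X` (here represented by
their half-spaces, with both orientations of a hyperplane at graph distance `0`
from each other being excluded by `¬ SameHyp`), and two distinct hyperplanes are
adjacent iff they are transverse or tightly nested. -/
def contactGraph : SimpleGraph C.HS where
  Adj h k := ¬ SameHyp (h : Set V) k ∧
    (Transverse (h : Set V) k ∨ C.TightContact h k ∨ C.TightContact k h)
  symm := by
    constructor
    rintro a b ⟨ns, r⟩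
    refine ⟨fun s => ns s.symm, ?_⟩
    rcases r with t | tc | tc
    · exact Or.inl t.symm
    · exact Or.inr (Or.inr tc)
    · exact Or.inr (Or.inl tc)
  loopless := ⟨fun a ha => ha.1 (Or.inl rfl)⟩

/-- the combinatorial metric: the number of hyperplanes separating two vertices -/
noncomputable def dist (x y : V) : ℕ := {h ∈ C.HS | x ∈ h ∧ y ∉ h}.ncard

end CubicalCpx

/-- If two hyperplanes of a CAT(0) cubical complex are at distance
at least `3` in the contact graph, then they are strongly separated. -/
theorem stmt0 (C : CubicalCpx V) (h k : C.HS)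
    (hd : 3 ≤ C.contactGraph.edist h k) :
    C.StronglySeparated (h : Set V) (k : Set V) := by

  have trans_not_same : ∀ a b : Set V, Transverse a b → ¬ SameHyp a b := by
    rintro a b ⟨p1, p2, p3, p4⟩ (rfl | rfl)
    · simp at p2
    · simp at p1
  constructor
  · intro t
    have adj : C.contactGraph.Adj h k := ⟨trans_not_same _ _ t, Or.inl t⟩
    have : C.contactGraph.edist h k = 1 := (SimpleGraph.edist_eq_one_iff_adj).2 adj
    rw [this] at hd
    exact absurd hd (by norm_num)
  · rintro l hl ⟨tlh, tlk⟩
    set L : C.HS := ⟨l, hl⟩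
    have adj1 : C.contactGraph.Adj h L :=
      ⟨fun s => trans_not_same _ _ tlh s.symm, Or.inl tlh.symm⟩
    have adj2 : C.contactGraph.Adj L k := ⟨trans_not_same _ _ tlk, Or.inl tlk⟩
    have e1 : C.contactGraph.edist h L = 1 := (SimpleGraph.edist_eq_one_iff_adj).2 adj1
    have e2 : C.contactGraph.edist L k = 1 := (SimpleGraph.edist_eq_one_iff_adj).2 adj2
    have := C.contactGraph.edist_triangle (u := h) (v := L) (w := k)
    rw [e1, e2] at this
    have : C.contactGraph.edist h k ≤ 2 := by exact_mod_cast this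
    exact absurd (hd.trans this) (by norm_num)
end

section
/- Let h₀ ⊂ h₁ ⊂ ⋯ ⊂ h_N be a chain of distinct pairwise strongly separated half-spaces in a finite-dimensional CAT(0) cubical complex X. Then in the contact graph CX, for all 0 ≤ n, m ≤ N the Gromov product satisfies (ĥ_n | ĥ_m)_{ĥ₀} ≥ min(n, m) − 3. -/
/-!
A combinatorial model of a finite-dimensional CAT(0) cubical complex:
the vertex set `V` together with its collection of half-spaces `HS ⊆ Set V`,
axiomatized as a pocset of subsets of `V` whose dual (Sageev) complex has
vertex set exactly `V`.
-/

open Set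

variable {V : Type*}

/-! ### Auxiliary machinery for Statement 3 -/

section Aux

/-- `v` crosses the hyperplane bounded by `h`: it is transverse to it or bounds it. -/
def HypCrosses (h v : Set V) : Prop := Transverse v h ∨ v = h ∨ v = hᶜ

/-- the hyperplane bounded by `v` lies (weakly) in the region `h` -/
def HypInReg (h v : Set V) : Prop := v ⊆ h ∨ vᶜ ⊆ h

lemma subset_of_not_corner {s t : Set V} (h : ¬ (s ∩ tᶜ).Nonempty) : s ⊆ t :=
  fun x hx => not_not.mp fun hxt => h ⟨x, hx, hxt⟩

lemma transverse_compl_left {h k : Set V} (t : Transverse hᶜ k) : Transverse h k := by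
  obtain ⟨a, b, c, d⟩ := t
  rw [compl_compl] at b d
  exact ⟨b, a, d, c⟩

lemma not_transverse_self_hyp {h v : Set V} (t : Transverse v h) : v ≠ h ∧ v ≠ hᶜ := by
  constructor
  · rintro rfl
    obtain ⟨x, hx1, hx2⟩ := t.2.1
    exact hx1 hx2
  · rintro rfl
    obtain ⟨x, hx1, hx2⟩ := t.1
    exact hx1 hx2

/-- trichotomy: a non-transverse hyperplane lies in one of the two regions -/
lemma hypInReg_or {h v : Set V} (hnt : ¬ Transverse v h) :
    HypInReg h v ∨ HypInReg hᶜ v := by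
  by_cases c1 : (v ∩ h).Nonempty
  · by_cases c2 : (vᶜ ∩ h).Nonempty
    · by_cases c3 : (v ∩ hᶜ).Nonempty
      · by_cases c4 : (vᶜ ∩ hᶜ).Nonempty
        · exact absurd ⟨c1, c2, c3, c4⟩ hnt
        · exact Or.inl (Or.inr (by simpa using subset_of_not_corner (by simpa using c4)))
      · exact Or.inl (Or.inl (subset_of_not_corner c3))
    · -- vᶜ ∩ h = ∅, so vᶜ ⊆ hᶜ
      refine Or.inr (Or.inr (subset_of_not_corner ?_))
      simpa using c2
  · -- v ∩ h = ∅, so v ⊆ hᶜ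
    refine Or.inr (Or.inl (subset_of_not_corner ?_))
    simpa using c1

/-- orientations of a hyperplane lying in region `h` -/
lemma orient_reg {h x x' : Set V} (hx : HypInReg h x) (s : SameHyp x x') :
    x' ⊆ h ∨ hᶜ ⊆ x' := by
  rcases s with rfl | rfl
  · rcases hx with h1 | h1
    · exact Or.inl h1
    · exact Or.inr (compl_subset_comm.mp h1)
  · rcases hx with h1 | h1
    · exact Or.inr (compl_subset_compl.mpr h1)
    · exact Or.inl h1

/-- orientations of a hyperplane lying in region `hᶜ` -/
lemma orient_reg' {h x x' : Set V} (hx : HypInReg hᶜ x) (s : SameHyp x x') :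
    x' ⊆ hᶜ ∨ h ⊆ x' := by
  have := orient_reg hx s
  rwa [compl_compl] at this


lemma sameHyp_compl_left {h k : Set V} (s : SameHyp hᶜ k) : SameHyp h k := by
  rcases s with e | e
  · exact Or.inr e
  · exact Or.inl (by rw [e, compl_compl])

namespace CubicalCpx

variable (C : CubicalCpx V)

lemma hs_proper {x : Set V} (hx : x ∈ C.HS) : x.Nonempty ∧ xᶜ.Nonempty := C.proper x hx

/-- the key "no side jump" lemma: two hyperplanes in contact cannot lie
strictly on opposite sides of a hyperplane of the complex -/
lemma no_jump {h : Set V} (hh : h ∈ C.HS) {a c : C.HS}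
    (adj : C.contactGraph.Adj a c)
    (ha : HypInReg h (a : Set V)) (hna : ¬ HypCrosses h (a : Set V))
    (hc : HypInReg hᶜ (c : Set V)) (hnc : ¬ HypCrosses h (c : Set V)) : False := by
  have pa := C.hs_proper a.2
  have pc := C.hs_proper c.2
  have hane : (a : Set V) ≠ h ∧ (a : Set V) ≠ hᶜ :=
    ⟨fun e => hna (Or.inr (Or.inl e)), fun e => hna (Or.inr (Or.inr e))⟩
  have hcne : (c : Set V) ≠ h ∧ (c : Set V) ≠ hᶜ :=
    ⟨fun e => hnc (Or.inr (Or.inl e)), fun e => hnc (Or.inr (Or.inr e))⟩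
  obtain ⟨ns, t | tc | tc⟩ := (adj : ¬ SameHyp (a : Set V) c ∧ (Transverse (a : Set V) c ∨ C.TightContact a c ∨ C.TightContact c a))
  · -- transverse contact: pick the corner lying in h ∩ hᶜ
    obtain ⟨t1, t2, t3, t4⟩ := t
    rcases ha with ha' | ha' <;> rcases hc with hc' | hc'
    · obtain ⟨x, hx1, hx2⟩ := t1
      exact hc' hx2 (ha' hx1)
    · obtain ⟨x, hx1, hx2⟩ := t3
      exact hc' hx2 (ha' hx1)
    · obtain ⟨x, hx1, hx2⟩ := t2
      exact hc' hx2 (ha' hx1)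
    · obtain ⟨x, hx1, hx2⟩ := t4
      exact hc' hx2 (ha' hx1)
  · -- a tightly nested inside c (up to orientation)
    obtain ⟨a', c', sa, sc, ss, tight⟩ := tc
    have pa' : a'.Nonempty ∧ a'ᶜ.Nonempty := by
      rcases sa with rfl | rfl
      · exact pa
      · exact ⟨pa.2, by simpa using pa.1⟩
    have pc' : c'.Nonempty ∧ c'ᶜ.Nonempty := by
      rcases sc with rfl | rfl
      · exact pc
      · exact ⟨pc.2, by simpa using pc.1⟩
    have ha' := orient_reg ha sa
    have hc' := orient_reg' hc sc
    rcases ha' with ha' | ha' <;> rcases hc' with hc' | hc'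
    · -- a' ⊆ h, c' ⊆ hᶜ : a' empty
      obtain ⟨x, hx⟩ := pa'.1
      exact (hc' (ss.subset hx)) (ha' hx)
    · -- a' ⊆ h ⊆ c' : h strictly between, contradicting tightness
      rcases tight h hh ha' hc' with rfl | rfl
      · rcases sa with rfl | e
        · exact hane.1 rfl
        · exact hane.2 (by rw [e, compl_compl])
      · rcases sc with rfl | e
        · exact hcne.1 rfl
        · exact hcne.2 (by rw [e, compl_compl])
    · -- hᶜ ⊆ a', c' ⊆ hᶜ : c' ⊆ a' contradicts strictness
      exact ss.not_subset (hc'.trans ha')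
    · -- hᶜ ⊆ a' ⊊ c' and h ⊆ c' : c' = univ
      obtain ⟨x, hx⟩ := pc'.2
      by_cases hxh : x ∈ h
      · exact hx (hc' hxh)
      · exact hx (ss.subset (ha' hxh))
  · -- c tightly nested inside a (up to orientation)
    obtain ⟨c', a', sc, sa, ss, tight⟩ := tc
    have pa' : a'.Nonempty ∧ a'ᶜ.Nonempty := by
      rcases sa with rfl | rfl
      · exact pa
      · exact ⟨pa.2, by simpa using pa.1⟩
    have pc' : c'.Nonempty ∧ c'ᶜ.Nonempty := by
      rcases sc with rfl | rfl
      · exact pc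
      · exact ⟨pc.2, by simpa using pc.1⟩
    have ha' := orient_reg ha sa
    have hc' := orient_reg' hc sc
    rcases ha' with ha' | ha' <;> rcases hc' with hc' | hc'
    · -- c' ⊆ hᶜ, a' ⊆ h: c' ⊊ a' ⊆ h and c' ⊆ hᶜ : c' empty
      obtain ⟨x, hx⟩ := pc'.1
      exact (hc' hx) (ha' (ss.subset hx))
    · -- h ⊆ c' ⊊ a' ⊆ h : contradiction
      exact ss.not_subset (ha'.trans hc')
    · -- c' ⊆ hᶜ ⊆ a' : hᶜ strictly between, contradicting tightness
      rcases tight hᶜ (C.compl_mem h hh) hc' ha' with e | e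
      · rcases sc with rfl | e'
        · exact hcne.2 e.symm
        · exact hcne.1 (by rw [← compl_compl (c : Set V), ← e', ← e, compl_compl])
      · rcases sa with rfl | e'
        · exact hane.2 e.symm
        · exact hane.1 (by rw [← compl_compl (a : Set V), ← e', ← e, compl_compl])
    · -- h ⊆ c' ⊊ a' and hᶜ ⊆ a' : a' = univ
      obtain ⟨x, hx⟩ := pa'.2
      by_cases hxh : x ∈ h
      · exact hx (ss.subset (hc' hxh))
      · exact hx (ha' hxh)

/-- Along any walk in the contact graph from the region `h` to the region `hᶜ`,
some vertex crosses the hyperplane bounded by `h`. -/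
lemma exists_cross {h : Set V} (hh : h ∈ C.HS) {a b : C.HS}
    (w : C.contactGraph.Walk a b) :
    HypInReg h (a : Set V) → HypInReg hᶜ (b : Set V) →
      ∃ v ∈ w.support, HypCrosses h (v : Set V) := by
  induction w with
  | nil =>
    rename_i u
    intro ha hb
    refine ⟨u, by simp, ?_⟩
    have pa := C.hs_proper u.2
    rcases ha with h1 | h1 <;> rcases hb with h2 | h2
    · obtain ⟨x, hx⟩ := pa.1
      exact absurd (h1 hx) (h2 hx)
    · exact Or.inr (Or.inl (Subset.antisymm h1 (compl_subset_compl.mp h2)))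
    · exact Or.inr (Or.inr (Subset.antisymm h2 (compl_subset_comm.mp h1)))
    · obtain ⟨x, hx⟩ := pa.2
      exact absurd (h1 hx) (h2 hx)
  | cons adj p ih =>
    rename_i x y z
    intro ha hb
    by_cases ca : HypCrosses h (x : Set V)
    · exact ⟨x, by simp, ca⟩
    by_cases cc : HypCrosses h (y : Set V)
    · refine ⟨y, ?_, cc⟩
      rw [SimpleGraph.Walk.support_cons]
      exact List.mem_cons_of_mem _ p.start_mem_support
    have hntc : ¬ Transverse (y : Set V) h := fun t => cc (Or.inl t)
    rcases hypInReg_or hntc with hreg | hreg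
    · obtain ⟨u, hu, hcu⟩ := ih hreg hb
      refine ⟨u, ?_, hcu⟩
      rw [SimpleGraph.Walk.support_cons]
      exact List.mem_cons_of_mem _ hu
    · exact (C.no_jump hh adj ha ca hreg cc).elim

/-- transverse hyperplanes are adjacent in the contact graph -/
lemma adj_of_transverse {x y : C.HS} (t : Transverse (x : Set V) (y : Set V)) :
    C.contactGraph.Adj x y := by
  have hne := not_transverse_self_hyp t
  show ¬ SameHyp (x : Set V) y ∧ (Transverse (x : Set V) y ∨ C.TightContact x y ∨ C.TightContact y x)
  refine ⟨?_, Or.inl t⟩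
  rintro (e | e)
  · exact hne.1 e.symm
  · exact hne.2 (by rw [e, compl_compl])

/-- adjacency only depends on the underlying hyperplane -/
lemma adj_transfer {x y z : C.HS} (e : (x : Set V) = (y : Set V)ᶜ)
    (adj : C.contactGraph.Adj x z) : C.contactGraph.Adj y z := by
  obtain ⟨ns, rel⟩ := (adj : ¬ SameHyp (x : Set V) z ∧ (Transverse (x : Set V) z ∨ C.TightContact x z ∨ C.TightContact z x))
  rw [e] at ns rel
  show ¬ SameHyp (y : Set V) z ∧ (Transverse (y : Set V) z ∨ C.TightContact y z ∨ C.TightContact z y)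
  constructor
  · rintro (e1 | e1)
    · exact ns (Or.inr (by rw [compl_compl]; exact e1))
    · exact ns (Or.inl e1)
  · rcases rel with t | tc | tc
    · exact Or.inl (transverse_compl_left t)
    · obtain ⟨h', k', s1, s2, tn⟩ := tc
      exact Or.inr (Or.inl ⟨h', k', sameHyp_compl_left s1, s2, tn⟩)
    · obtain ⟨h', k', s1, s2, tn⟩ := tc
      exact Or.inr (Or.inr ⟨h', k', s1, sameHyp_compl_left s2, tn⟩)

/-- a vertex of the contact graph crosses at most one hyperplane of a strongly
separated chain -/
lemma cross_unique {hi hj v : Set V} (hij : hi ⊂ hj)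
    (ss : ∀ l ∈ C.HS, ¬ (Transverse l hi ∧ Transverse l hj)) (hv : v ∈ C.HS)
    (ci : HypCrosses hi v) (cj : HypCrosses hj v) : False := by
  have pv := C.hs_proper hv
  rcases ci with ti | rfl | e <;> rcases cj with tj | rfl | e'
  · exact ss v hv ⟨ti, tj⟩
  · -- v = hj transverse to hi : corner vᶜ ∩ hi = hjᶜ ∩ hi empty
    obtain ⟨x, hx1, hx2⟩ := ti.2.1
    exact hx1 (hij.subset hx2)
  · -- v = hjᶜ transverse to hi : corner v ∩ hi = hjᶜ ∩ hi empty
    subst e'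
    obtain ⟨x, hx1, hx2⟩ := ti.1
    exact hx1 (hij.subset hx2)
  · -- v = hi transverse to hj : corner v ∩ hjᶜ empty
    obtain ⟨x, hx1, hx2⟩ := tj.2.2.1
    exact hx2 (hij.subset hx1)
  · exact hij.ne rfl
  · -- hi = hjᶜ : hi nonempty, hi ⊆ hj
    obtain ⟨x, hx⟩ := pv.1
    have hx2 : x ∈ hjᶜ := by rw [← e']; exact hx
    exact hx2 (hij.subset hx)
  · -- v = hiᶜ transverse to hj : corner vᶜ ∩ hjᶜ = hi ∩ hjᶜ empty
    subst e
    obtain ⟨x, hx1, hx2⟩ := tj.2.2.2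
    rw [compl_compl] at hx1
    exact hx2 (hij.subset hx1)
  · -- hiᶜ = hj : hi ⊆ hj = hiᶜ and hi = vᶜ nonempty
    obtain ⟨x, hx⟩ := pv.2
    have hx1 : x ∈ hi := by
      have hx' := hx
      rw [e, compl_compl] at hx'
      exact hx'
    exact hx (hij.subset hx1)
  · -- hiᶜ = hjᶜ
    rw [e'] at e
    exact hij.ne (compl_injective e).symm

end CubicalCpx

section Chain

variable (C : CubicalCpx V) (N : ℕ) (hs : ℕ → Set V)
  (hmem : ∀ i, i ≤ N → hs i ∈ C.HS)
  (hchain : ∀ i j, i < j → j ≤ N →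
    hs i ⊂ hs j ∧ C.StronglySeparated (hs i) (hs j))

include hmem hchain

/-- monotonicity of the chain (weak version) -/
lemma chain_mono : ∀ i j, i ≤ j → j ≤ N → hs i ⊆ hs j := by
  intro i j hij hj
  rcases eq_or_lt_of_le hij with rfl | hlt
  · exact subset_rfl
  · exact (hchain i j hlt hj).1.subset

/-- **Lemma A**: the distance from `ĥ 0` to `ĥ n` in the contact graph is at least `n`. -/
lemma lemA (n : ℕ) (hn : n ≤ N) :
    (n : ℕ∞) ≤ C.contactGraph.edist ⟨hs 0, hmem 0 (Nat.zero_le N)⟩ ⟨hs n, hmem n hn⟩ := by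
  classical
  set a : C.HS := ⟨hs 0, hmem 0 (Nat.zero_le N)⟩ with ha_def
  set b : C.HS := ⟨hs n, hmem n hn⟩ with hb_def
  by_cases htop : C.contactGraph.edist a b = ⊤
  · rw [htop]; exact le_top
  obtain ⟨w, hw⟩ := SimpleGraph.exists_walk_of_edist_ne_top htop
  have hcr : ∀ i : Fin (n + 1), ∃ v ∈ w.support, HypCrosses (hs i) (v : Set V) := by
    intro i
    have hiN : (i : ℕ) ≤ N := le_trans (Nat.lt_succ_iff.mp i.2) hn
    apply C.exists_cross (hmem i hiN) w
    · exact Or.inl (chain_mono C N hs hmem hchain 0 i (Nat.zero_le _) hiN)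
    · exact Or.inr (compl_subset_compl.mpr
        (chain_mono C N hs hmem hchain i n (Nat.lt_succ_iff.mp i.2) hn))
  choose f hf1 hf2 using hcr
  have hinj : ∀ i j : Fin (n + 1), f i = f j → i = j := by
    intro i j hij
    by_contra hne
    have hcj : HypCrosses (hs j) ((f i : C.HS) : Set V) := by
      rw [hij]; exact hf2 j
    rcases Ne.lt_or_gt (fun e : (i : ℕ) = (j : ℕ) => hne (Fin.ext e)) with hlt | hlt
    · obtain ⟨sub, ssep⟩ := hchain i j hlt (le_trans (Nat.lt_succ_iff.mp j.2) hn)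
      exact C.cross_unique sub ssep.2 (f i).2 (hf2 i) hcj
    · obtain ⟨sub, ssep⟩ := hchain j i hlt (le_trans (Nat.lt_succ_iff.mp i.2) hn)
      exact C.cross_unique sub ssep.2 (f i).2 hcj (hf2 i)
  have hcard : n + 1 ≤ w.support.toFinset.card := by
    have : (Finset.univ : Finset (Fin (n + 1))).card ≤ w.support.toFinset.card := by
      apply Finset.card_le_card_of_injOn f
      · intro i _
        simpa [List.mem_toFinset] using hf1 i
      · intro i _ j _ hij
        exact hinj i j hij
    simpa using this
  have hlen : n ≤ w.length := by
    have h1 : w.support.toFinset.card ≤ w.support.length := w.support.toFinset_card_le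
    have h2 : w.support.length = w.length + 1 := w.length_support
    omega
  rw [← hw]
  exact_mod_cast hlen

/-- **Lemma B**: any geodesic from `ĥ 0` to `ĥ m` passes within distance 2 of `ĥ n`. -/
lemma lemB (n m : ℕ) (h0n : 0 < n) (hnm : n < m) (hm : m ≤ N) :
    C.contactGraph.edist ⟨hs n, hmem n (le_of_lt (lt_of_lt_of_le hnm hm))⟩
        ⟨hs m, hmem m hm⟩ + (n : ℕ∞) ≤
      C.contactGraph.edist ⟨hs 0, hmem 0 (Nat.zero_le N)⟩ ⟨hs m, hmem m hm⟩ + 4 := by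
  classical
  have hnN : n ≤ N := le_of_lt (lt_of_lt_of_le hnm hm)
  set G := C.contactGraph with hG
  set a : C.HS := ⟨hs 0, hmem 0 (Nat.zero_le N)⟩ with ha_def
  set vn : C.HS := ⟨hs n, hmem n hnN⟩ with hvn_def
  set b : C.HS := ⟨hs m, hmem m hm⟩ with hb_def
  by_cases htop : G.edist a b = ⊤
  · rw [htop, top_add]; exact le_top
  obtain ⟨w, hw⟩ := SimpleGraph.exists_walk_of_edist_ne_top htop
  obtain ⟨v, vs, cv⟩ := C.exists_cross (hmem n hnN) w
    (Or.inl (chain_mono C N hs hmem hchain 0 n (Nat.zero_le _) hnN))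
    (Or.inr (compl_subset_compl.mpr (chain_mono C N hs hmem hchain n m (le_of_lt hnm) hm)))
  have pvn := C.hs_proper (hmem n hnN)
  -- the crossing vertex is within distance 2 of ĥn
  have hv2 : G.edist v vn ≤ 2 := by
    rcases cv with t | e | e
    · -- transverse: adjacent
      have hadj : G.Adj v vn := C.adj_of_transverse t
      calc G.edist v vn ≤ 1 := (SimpleGraph.edist_eq_one_iff_adj.mpr hadj).le
        _ ≤ 2 := by norm_num
    · -- v = ĥn
      have : v = vn := Subtype.ext e
      rw [this, SimpleGraph.edist_self]
      norm_num
    · -- v = ĥnᶜ : use a neighbor on the walk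
      have hvb : v ≠ b := by
        intro hvb
        have e2 : (hs n)ᶜ = hs m := by
          rw [← e]
          exact congrArg Subtype.val hvb
        obtain ⟨x, hx⟩ := pvn.1
        have hxm : x ∈ hs m := chain_mono C N hs hmem hchain n m (le_of_lt hnm) hm hx
        rw [← e2] at hxm
        exact hxm hx
      have hnn : ¬ (w.dropUntil v vs).Nil := SimpleGraph.Walk.not_nil_of_ne hvb
      obtain ⟨u, hadj, q, -⟩ := SimpleGraph.Walk.not_nil_iff.mp hnn
      -- adjacency transfers to the other orientation
      have hadj' : G.Adj vn u := C.adj_transfer (x := v) e hadj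
      calc G.edist v vn ≤ G.edist v u + G.edist u vn := SimpleGraph.edist_triangle
        _ ≤ 1 + 1 := by
            apply add_le_add
            · exact (SimpleGraph.edist_eq_one_iff_adj.mpr hadj).le
            · exact (SimpleGraph.edist_eq_one_iff_adj.mpr hadj'.symm).le
        _ = 2 := by norm_num
  -- split the walk at v
  set w1 := w.takeUntil v vs with hw1
  set w2 := w.dropUntil v vs with hw2
  have hsplit : w1.length + w2.length = w.length := by
    have := congrArg SimpleGraph.Walk.length (w.take_spec vs)
    rwa [SimpleGraph.Walk.length_append] at this
  have e1 : G.edist a v ≤ (w1.length : ℕ∞) := SimpleGraph.edist_le w1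
  have e2 : G.edist v b ≤ (w2.length : ℕ∞) := SimpleGraph.edist_le w2
  have An : (n : ℕ∞) ≤ G.edist a vn := lemA C N hs hmem hchain n hnN
  have key1 : (n : ℕ∞) ≤ (w1.length : ℕ∞) + 2 := by
    calc (n : ℕ∞) ≤ G.edist a vn := An
      _ ≤ G.edist a v + G.edist v vn := SimpleGraph.edist_triangle
      _ ≤ (w1.length : ℕ∞) + 2 := add_le_add e1 hv2
  have key2 : G.edist vn b ≤ 2 + (w2.length : ℕ∞) := by
    calc G.edist vn b ≤ G.edist vn v + G.edist v b := SimpleGraph.edist_triangle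
      _ ≤ 2 + (w2.length : ℕ∞) := add_le_add (by rw [SimpleGraph.edist_comm]; exact hv2) e2
  calc G.edist vn b + (n : ℕ∞)
      ≤ (2 + (w2.length : ℕ∞)) + ((w1.length : ℕ∞) + 2) := add_le_add key2 key1
    _ = ((w1.length : ℕ∞) + (w2.length : ℕ∞)) + 4 := by
        push_cast
        ring
    _ = (w.length : ℕ∞) + 4 := by
        rw [← hsplit]
        push_cast
        ring
    _ = G.edist a b + 4 := by rw [hw]

end Chain

end Aux

/-- If `h 0 ⊂ h 1 ⊂ ⋯ ⊂ h N` is a chain of distinct pairwise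
strongly separated half-spaces, then in the contact graph the Gromov product
satisfies `(ĥ n | ĥ m)_{ĥ 0} ≥ min n m - 3` for all `n, m ≤ N`; equivalently
(avoiding subtraction in `ℕ∞`):
`d(ĥ n, ĥ m) + 2 * min n m ≤ d(ĥ 0, ĥ n) + d(ĥ 0, ĥ m) + 6`. -/
theorem stmt3 (C : CubicalCpx V) (N : ℕ) (hs : ℕ → Set V)
    (hmem : ∀ i, i ≤ N → hs i ∈ C.HS)
    (hchain : ∀ i j, i < j → j ≤ N →
      hs i ⊂ hs j ∧ C.StronglySeparated (hs i) (hs j)) :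
    ∀ n m, (hn : n ≤ N) → (hm : m ≤ N) →
      C.contactGraph.edist ⟨hs n, hmem n hn⟩ ⟨hs m, hmem m hm⟩
          + 2 * ((min n m : ℕ) : ℕ∞) ≤
        C.contactGraph.edist ⟨hs 0, hmem 0 (Nat.zero_le N)⟩ ⟨hs n, hmem n hn⟩
          + C.contactGraph.edist ⟨hs 0, hmem 0 (Nat.zero_le N)⟩ ⟨hs m, hmem m hm⟩
          + 6 := by
  have key : ∀ n m (hn : n ≤ N) (hm : m ≤ N), n ≤ m →
      C.contactGraph.edist ⟨hs n, hmem n hn⟩ ⟨hs m, hmem m hm⟩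
          + 2 * ((min n m : ℕ) : ℕ∞) ≤
        C.contactGraph.edist ⟨hs 0, hmem 0 (Nat.zero_le N)⟩ ⟨hs n, hmem n hn⟩
          + C.contactGraph.edist ⟨hs 0, hmem 0 (Nat.zero_le N)⟩ ⟨hs m, hmem m hm⟩
          + 6 := by
    intro n m hn hm hnm
    rw [min_eq_left hnm]
    rcases eq_or_lt_of_le hnm with rfl | hlt
    · -- n = m
      have h0 : C.contactGraph.edist ⟨hs n, hmem n hn⟩ ⟨hs n, hmem n hm⟩ = 0 :=
        SimpleGraph.edist_eq_zero_iff.mpr rfl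
      rw [h0, zero_add]
      have An := lemA C N hs hmem hchain n hn
      calc 2 * ((n : ℕ) : ℕ∞) = ((n : ℕ) : ℕ∞) + ((n : ℕ) : ℕ∞) := two_mul _
        _ ≤ C.contactGraph.edist ⟨hs 0, hmem 0 (Nat.zero_le N)⟩ ⟨hs n, hmem n hn⟩
            + C.contactGraph.edist ⟨hs 0, hmem 0 (Nat.zero_le N)⟩ ⟨hs n, hmem n hm⟩ :=
          add_le_add An An
        _ ≤ _ + 6 := self_le_add_right _ _
    · rcases Nat.eq_zero_or_pos n with rfl | hpos
      · -- n = 0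
        rw [Nat.cast_zero, mul_zero, add_zero]
        have h0 : C.contactGraph.edist ⟨hs 0, hmem 0 (Nat.zero_le N)⟩
            ⟨hs 0, hmem 0 hn⟩ = 0 := SimpleGraph.edist_eq_zero_iff.mpr rfl
        rw [h0, zero_add]
        exact self_le_add_right _ _
      · -- 0 < n < m
        have B := lemB C N hs hmem hchain n m hpos hlt hm
        have An := lemA C N hs hmem hchain n hn
        calc C.contactGraph.edist ⟨hs n, hmem n hn⟩ ⟨hs m, hmem m hm⟩
              + 2 * ((n : ℕ) : ℕ∞)
            = (C.contactGraph.edist ⟨hs n, hmem n hn⟩ ⟨hs m, hmem m hm⟩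
                + ((n : ℕ) : ℕ∞)) + ((n : ℕ) : ℕ∞) := by
              rw [two_mul, add_assoc]
          _ ≤ (C.contactGraph.edist ⟨hs 0, hmem 0 (Nat.zero_le N)⟩ ⟨hs m, hmem m hm⟩ + 4)
                + C.contactGraph.edist ⟨hs 0, hmem 0 (Nat.zero_le N)⟩ ⟨hs n, hmem n hn⟩ :=
              add_le_add B An
          _ = C.contactGraph.edist ⟨hs 0, hmem 0 (Nat.zero_le N)⟩ ⟨hs n, hmem n hn⟩
                + C.contactGraph.edist ⟨hs 0, hmem 0 (Nat.zero_le N)⟩ ⟨hs m, hmem m hm⟩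
                + 4 := by
              ring
          _ ≤ _ + 6 := by
              apply add_le_add_right
              norm_num
  intro n m hn hm
  rcases le_total n m with hnm | hmn
  · exact key n m hn hm hnm
  · have hkey := key m n hm hn hmn
    rw [SimpleGraph.edist_comm, min_comm n m]
    refine hkey.trans (le_of_eq ?_)
    ring
end

section
/- Let h₀ ⊂ h₁ ⊂ ⋯ ⊂ h_N be a chain of distinct pairwise strongly separated half-spaces in a finite-dimensional CAT(0) cubical complex X. Then for every 0 < k < N, the Gromov product in the contact graph satisfies (ĥ₀ | ĥ_N)_{ĥ_k} ≤ 3. -/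
/-!
A combinatorial model of a finite-dimensional CAT(0) cubical complex:
the vertex set `V` together with its collection of half-spaces `HS ⊆ Set V`,
axiomatized as a pocset of subsets of `V` whose dual (Sageev) complex has
vertex set exactly `V`.
-/

open Set

variable {V : Type*}

/-! ### Auxiliary material for Statement 4 -/

namespace StmtFour

open SimpleGraph

/-- The hyperplane of `w` lies (weakly) on the `hk` side. -/
def Side (hk w : Set V) : Prop := w ⊆ hk ∨ wᶜ ⊆ hk

lemma Side.compl {hk w : Set V} (h : Side hk w) : Side hk wᶜ := by
  rcases h with h | h
  · exact Or.inr (by simpa using h)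
  · exact Or.inl h

lemma Side.of_sameHyp {hk w w' : Set V} (hsh : SameHyp w w') (h : Side hk w) :
    Side hk w' := by
  rcases hsh with rfl | rfl
  · exact h
  · exact h.compl

lemma side_or {hk w : Set V} (ht : ¬ Transverse w hk) : Side hk w ∨ Side hkᶜ w := by
  by_cases h1 : (w ∩ hk).Nonempty
  · by_cases h2 : (wᶜ ∩ hk).Nonempty
    · by_cases h3 : (w ∩ hkᶜ).Nonempty
      · by_cases h4 : (wᶜ ∩ hkᶜ).Nonempty
        · exact absurd ⟨h1, h2, h3, h4⟩ ht
        · exact Or.inl (Or.inr fun x hx => by by_contra h; exact h4 ⟨x, hx, h⟩)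
      · exact Or.inl (Or.inl fun x hx => by by_contra h; exact h3 ⟨x, hx, h⟩)
    · exact Or.inr (Or.inr fun x hx hxk => h2 ⟨x, hx, hxk⟩)
  · exact Or.inr (Or.inl fun x hx hxk => h1 ⟨x, hx, hxk⟩)

lemma side_not_both {hk w : Set V} (hne : w.Nonempty) (hne' : wᶜ.Nonempty)
    (hsh : ¬ SameHyp hk w) (h1 : Side hk w) (h2 : Side hkᶜ w) : False := by
  rcases h1 with h1 | h1 <;> rcases h2 with h2 | h2
  · obtain ⟨x, hx⟩ := hne; exact h2 hx (h1 hx)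
  · exact hsh (Or.inl (subset_antisymm h1 fun x hx => by by_contra h; exact h2 h hx))
  · exact hsh (Or.inr (subset_antisymm h2 fun x hx => by by_contra h; exact hx (h1 h)))
  · obtain ⟨x, hx⟩ := hne'; exact h2 hx (h1 hx)

lemma mem_of_sameHyp {C : CubicalCpx V} {w a : Set V} (hw : w ∈ C.HS)
    (h : SameHyp w a) : a ∈ C.HS := by
  rcases h with rfl | rfl
  · exact hw
  · exact C.compl_mem w hw

lemma sameHyp_flip {hk w a : Set V} (sa : SameHyp w a) (h : SameHyp hk a) :
    SameHyp hk w := by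
  rcases sa with rfl | rfl
  · exact h
  · rcases h with h | h
    · exact Or.inr (by rw [← h, compl_compl])
    · exact Or.inl (compl_injective h)

lemma Transverse.not_sameHyp {h k : Set V} (t : Transverse h k) : ¬ SameHyp h k := by
  rintro (rfl | rfl)
  · obtain ⟨x, h1, h2⟩ := t.2.1; exact h1 h2
  · obtain ⟨x, h1, h2⟩ := t.1; exact h2 h1

lemma tight_cross (C : CubicalCpx V) {hk a b : Set V}
    (hkH : hk ∈ C.HS) (hane : a.Nonempty) (hbne : bᶜ.Nonempty)
    (htn : C.TightlyNested a b) (ha : Side hk a) (hb : Side hkᶜ b) :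
    a = hk ∨ b = hk := by
  obtain ⟨hab, htight⟩ := htn
  have hsub : a ⊆ b := subset_of_ssubset hab
  rcases ha with ha | ha <;> rcases hb with hb | hb
  · obtain ⟨x, hx⟩ := hane
    exact absurd (ha hx) (hb (hsub hx))
  · have hkb : hk ⊆ b := fun x hx => by by_contra h; exact hb h hx
    rcases htight hk hkH ha hkb with h | h
    · exact Or.inl h.symm
    · exact Or.inr h.symm
  · exact absurd (fun x hx => by by_contra h; exact hb hx (ha h)) hab.not_subset
  · obtain ⟨x, hx⟩ := hbne
    by_cases hxa : x ∈ a
    · exact (hx (hsub hxa)).elim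
    · exact ((hb hx) (ha hxa)).elim

lemma side_step (C : CubicalCpx V) {hk w w' : Set V} (hkH : hk ∈ C.HS)
    (hwH : w ∈ C.HS) (hw'H : w' ∈ C.HS)
    (hns : ¬ SameHyp w w')
    (hr : Transverse w w' ∨ C.TightContact w w' ∨ C.TightContact w' w)
    (hsw : ¬ SameHyp hk w) (hsw' : ¬ SameHyp hk w')
    (htw' : ¬ Transverse w' hk)
    (hside : Side hk w) : Side hk w' := by
  rcases side_or htw' with hgood | hbad
  · exact hgood
  exfalso
  rcases hr with ht | ⟨a, b, sa, sb, htn⟩ | ⟨a, b, sa, sb, htn⟩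
  · rcases hside with h1 | h1 <;> rcases hbad with h2 | h2
    · obtain ⟨x, hxw, hxw'⟩ := ht.1; exact h2 hxw' (h1 hxw)
    · obtain ⟨x, hxw, hxw'⟩ := ht.2.2.1; exact h2 hxw' (h1 hxw)
    · obtain ⟨x, hxw, hxw'⟩ := ht.2.1; exact h2 hxw' (h1 hxw)
    · obtain ⟨x, hxw, hxw'⟩ := ht.2.2.2; exact h2 hxw' (h1 hxw)
  · have haH : a ∈ C.HS := mem_of_sameHyp hwH sa
    have hbH : b ∈ C.HS := mem_of_sameHyp hw'H sb
    rcases tight_cross C hkH (C.proper a haH).1 (C.proper b hbH).2 htn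
        (Side.of_sameHyp sa hside) (Side.of_sameHyp sb hbad) with h | h
    · exact hsw (sameHyp_flip sa (Or.inl h))
    · exact hsw' (sameHyp_flip sb (Or.inl h))
  · have haH : a ∈ C.HS := mem_of_sameHyp hw'H sa
    have hbH : b ∈ C.HS := mem_of_sameHyp hwH sb
    have hb2 : Side hkᶜᶜ b := by
      rw [compl_compl]; exact Side.of_sameHyp sb hside
    rcases tight_cross C (C.compl_mem hk hkH) (C.proper a haH).1 (C.proper b hbH).2 htn
        (Side.of_sameHyp sa hbad) hb2 with h | h
    · exact hsw' (sameHyp_flip sa (Or.inr h))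
    · exact hsw (sameHyp_flip sb (Or.inr h))

lemma exists_cross (C : CubicalCpx V) {hk : Set V} (hkH : hk ∈ C.HS)
    {u v : C.HS} (p : C.contactGraph.Walk u v)
    (hu : Side hk (u : Set V)) (hv : Side hkᶜ (v : Set V)) :
    ∃ i, i ≤ p.length ∧
      (Transverse ((p.getVert i : C.HS) : Set V) hk ∨
        SameHyp hk ((p.getVert i : C.HS) : Set V)) := by
  by_contra hc
  push_neg at hc
  have key : ∀ i, i ≤ p.length → Side hk ((p.getVert i : C.HS) : Set V) := by
    intro i
    induction i with
    | zero => intro _; simpa [SimpleGraph.Walk.getVert_zero] using hu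
    | succ n ih =>
      intro hi
      have hn : n < p.length := Nat.lt_of_succ_le hi
      have hadj := p.adj_getVert_succ hn
      unfold CubicalCpx.contactGraph at hadj
      obtain ⟨hns, hr⟩ := hadj
      exact side_step C hkH (p.getVert n).2 (p.getVert (n + 1)).2 hns hr
        (hc n hn.le).2 (hc (n + 1) hi).2 (hc (n + 1) hi).1 (ih hn.le)
  have hlast := key p.length le_rfl
  rw [SimpleGraph.Walk.getVert_length] at hlast
  have hcl := (hc p.length le_rfl).2
  rw [SimpleGraph.Walk.getVert_length] at hcl
  exact side_not_both (C.proper _ v.2).1 (C.proper _ v.2).2 hcl hlast hv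

lemma edist_getVert_le {α : Type*} {G : SimpleGraph α} {u v : α} (p : G.Walk u v)
    (i : ℕ) : G.edist u (p.getVert i) ≤ (i : ℕ∞) := by
  induction i with
  | zero => simp [SimpleGraph.Walk.getVert_zero]
  | succ n ih =>
    by_cases h : n < p.length
    · calc G.edist u (p.getVert (n + 1))
          ≤ G.edist u (p.getVert n) + G.edist (p.getVert n) (p.getVert (n + 1)) :=
            SimpleGraph.edist_triangle
        _ ≤ (n : ℕ∞) + 1 :=
            add_le_add ih (le_of_eq (SimpleGraph.edist_eq_one_iff_adj.mpr
              (p.adj_getVert_succ h)))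
        _ = ((n + 1 : ℕ) : ℕ∞) := by norm_cast
    · have e1 : p.getVert (n + 1) = p.getVert n := by
        rw [p.getVert_of_length_le (le_of_not_gt h),
          p.getVert_of_length_le (Nat.le_succ_of_le (le_of_not_gt h))]
      rw [e1]
      exact le_trans ih (by exact_mod_cast Nat.le_succ n)

lemma edist_getVert_right {α : Type*} {G : SimpleGraph α} {u v : α} (p : G.Walk u v)
    {i : ℕ} (hi : i ≤ p.length) :
    G.edist (p.getVert i) v ≤ ((p.length - i : ℕ) : ℕ∞) := by
  have h := edist_getVert_le p.reverse (p.length - i)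
  rw [SimpleGraph.Walk.getVert_reverse, Nat.sub_sub_self hi] at h
  rwa [SimpleGraph.edist_comm] at h

lemma finish {x y : ℕ∞} {a b n : ℕ} (hx : x ≤ (a : ℕ∞)) (hy : y ≤ (b : ℕ∞))
    (h : a + b ≤ n + 6) : x + y ≤ (n : ℕ∞) + 6 := by
  calc x + y ≤ (a : ℕ∞) + (b : ℕ∞) := add_le_add hx hy
    _ ≤ (n : ℕ∞) + 6 := by exact_mod_cast h

lemma contact_compl (C : CubicalCpx V) {h w : Set V}
    (hp : ¬ SameHyp hᶜ w ∧
      (Transverse hᶜ w ∨ C.TightContact hᶜ w ∨ C.TightContact w hᶜ)) :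
    ¬ SameHyp h w ∧ (Transverse h w ∨ C.TightContact h w ∨ C.TightContact w h) := by
  obtain ⟨hns, hr⟩ := hp
  have hsh : ∀ x : Set V, SameHyp h x ↔ SameHyp hᶜ x := fun x => by
    simp [SameHyp, compl_compl, or_comm]
  refine ⟨fun hh => hns ((hsh w).mp hh), ?_⟩
  rcases hr with ht | ⟨a, b, sa, sb, htn⟩ | ⟨a, b, sa, sb, htn⟩
  · obtain ⟨t1, t2, t3, t4⟩ := ht
    refine Or.inl ⟨?_, ?_, ?_, ?_⟩
    · simpa using t2
    · exact t1
    · simpa using t4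
    · exact t3
  · exact Or.inr (Or.inl ⟨a, b, (hsh a).mpr sa, sb, htn⟩)
  · exact Or.inr (Or.inr ⟨a, b, sa, (hsh b).mpr sb, htn⟩)

lemma adj_of_adj_compl (C : CubicalCpx V) {x y : C.HS} (z : C.HS)
    (hz : (x : Set V) = (z : Set V)ᶜ) (h : C.contactGraph.Adj x y) :
    C.contactGraph.Adj z y := by
  unfold CubicalCpx.contactGraph at h ⊢
  obtain ⟨hns, hr⟩ := h
  rw [hz] at hns hr
  exact contact_compl C ⟨hns, hr⟩

end StmtFour

/-- If `h 0 ⊂ h 1 ⊂ ⋯ ⊂ h N` is a chain of distinct pairwise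
strongly separated half-spaces, then for every `0 < k < N` the Gromov product in
the contact graph satisfies `(ĥ 0 | ĥ N)_{ĥ k} ≤ 3`; equivalently
`d(ĥ 0, ĥ k) + d(ĥ N, ĥ k) ≤ d(ĥ 0, ĥ N) + 6`. -/
theorem stmt4 (C : CubicalCpx V) (N : ℕ) (hs : ℕ → Set V)
    (hmem : ∀ i, i ≤ N → hs i ∈ C.HS)
    (hchain : ∀ i j, i < j → j ≤ N →
      hs i ⊂ hs j ∧ C.StronglySeparated (hs i) (hs j)) :
    ∀ k, 0 < k → (hk : k < N) →
      C.contactGraph.edist ⟨hs 0, hmem 0 (Nat.zero_le N)⟩ ⟨hs k, hmem k hk.le⟩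
          + C.contactGraph.edist ⟨hs N, hmem N le_rfl⟩ ⟨hs k, hmem k hk.le⟩ ≤
        C.contactGraph.edist ⟨hs 0, hmem 0 (Nat.zero_le N)⟩ ⟨hs N, hmem N le_rfl⟩
          + 6 := by
  intro k hk0 hkN
  have h0k : hs 0 ⊂ hs k := (hchain 0 k hk0 hkN.le).1
  have hkNs : hs k ⊂ hs N := (hchain k N hkN le_rfl).1
  have hkH : hs k ∈ C.HS := hmem k hkN.le
  by_cases hreach : C.contactGraph.Reachable ⟨hs 0, hmem 0 (Nat.zero_le N)⟩
      ⟨hs N, hmem N le_rfl⟩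
  · obtain ⟨p, hp⟩ := hreach.exists_walk_length_eq_edist
    rw [← hp]
    have hu : StmtFour.Side (hs k) (hs 0) := Or.inl (subset_of_ssubset h0k)
    have hv : StmtFour.Side (hs k)ᶜ (hs N) :=
      Or.inr (compl_subset_compl.mpr (subset_of_ssubset hkNs))
    obtain ⟨i, hiL, hP⟩ := StmtFour.exists_cross C hkH p hu hv
    rcases hP with ht | he
    · -- the hyperplane at step `i` is transverse to `hs k`
      have hadj : C.contactGraph.Adj (p.getVert i) ⟨hs k, hmem k hkN.le⟩ :=
        by unfold CubicalCpx.contactGraph; exact ⟨StmtFour.Transverse.not_sameHyp ht, Or.inl ht⟩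
      have b1 : C.contactGraph.edist ⟨hs 0, hmem 0 (Nat.zero_le N)⟩
          ⟨hs k, hmem k hkN.le⟩ ≤ ((i + 1 : ℕ) : ℕ∞) := by
        refine le_trans (SimpleGraph.edist_triangle (v := p.getVert i)) ?_
        rw [Nat.cast_add, Nat.cast_one]
        exact add_le_add (StmtFour.edist_getVert_le p i)
          (le_of_eq (SimpleGraph.edist_eq_one_iff_adj.mpr hadj))
      have b2 : C.contactGraph.edist ⟨hs N, hmem N le_rfl⟩
          ⟨hs k, hmem k hkN.le⟩ ≤ ((p.length - i + 1 : ℕ) : ℕ∞) := by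
        refine le_trans (SimpleGraph.edist_triangle (v := p.getVert i)) ?_
        rw [Nat.cast_add, Nat.cast_one]
        refine add_le_add ?_ (le_of_eq (SimpleGraph.edist_eq_one_iff_adj.mpr hadj))
        rw [SimpleGraph.edist_comm]
        exact StmtFour.edist_getVert_right p hiL
      exact StmtFour.finish b1 b2 (by omega)
    · rcases he with he | he
      · -- the hyperplane at step `i` is `hs k` itself
        have hvert : p.getVert i = ⟨hs k, hmem k hkN.le⟩ := Subtype.ext he
        have b1 : C.contactGraph.edist ⟨hs 0, hmem 0 (Nat.zero_le N)⟩
            ⟨hs k, hmem k hkN.le⟩ ≤ ((i : ℕ) : ℕ∞) := by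
          rw [← hvert]; exact StmtFour.edist_getVert_le p i
        have b2 : C.contactGraph.edist ⟨hs N, hmem N le_rfl⟩
            ⟨hs k, hmem k hkN.le⟩ ≤ ((p.length - i : ℕ) : ℕ∞) := by
          rw [SimpleGraph.edist_comm, ← hvert]
          exact StmtFour.edist_getVert_right p hiL
        exact StmtFour.finish b1 b2 (by omega)
      · -- the hyperplane at step `i` is `(hs k)ᶜ`
        have hi0 : 0 < i := by
          rcases Nat.eq_zero_or_pos i with rfl | h
          · exfalso
            rw [p.getVert_zero] at he
            obtain ⟨x, hx⟩ := (C.proper (hs k) hkH).2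
            have hx0 : x ∈ hs 0 := by
              show x ∈ hs 0
              rw [show hs 0 = (hs k)ᶜ from he]
              exact hx
            exact hx (subset_of_ssubset h0k hx0)
          · exact h
        have hin : i < p.length := by
          rcases Nat.lt_or_ge i p.length with h | h
          · exact h
          · exfalso
            have hieq : i = p.length := le_antisymm hiL h
            subst hieq
            rw [p.getVert_length] at he
            obtain ⟨x, hx⟩ := (C.proper (hs k) hkH).1
            have hxN : x ∈ (hs k)ᶜ := by
              rw [show ((hs k)ᶜ : Set V) = hs N from he.symm]
              exact subset_of_ssubset hkNs hx
            exact hxN hx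
        have hadj1 := p.adj_getVert_succ hin
        have hadjk1 : C.contactGraph.Adj ⟨hs k, hmem k hkN.le⟩ (p.getVert (i + 1)) :=
          StmtFour.adj_of_adj_compl C _ he hadj1
        have hprev : i - 1 < p.length := by omega
        have hadj2 := p.adj_getVert_succ hprev
        rw [show i - 1 + 1 = i by omega] at hadj2
        have hadjk2 : C.contactGraph.Adj (p.getVert (i - 1)) ⟨hs k, hmem k hkN.le⟩ :=
          (StmtFour.adj_of_adj_compl C _ he hadj2.symm).symm
        have b1 : C.contactGraph.edist ⟨hs 0, hmem 0 (Nat.zero_le N)⟩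
            ⟨hs k, hmem k hkN.le⟩ ≤ ((i - 1 + 1 : ℕ) : ℕ∞) := by
          refine le_trans (SimpleGraph.edist_triangle (v := p.getVert (i - 1))) ?_
          rw [Nat.cast_add, Nat.cast_one]
          exact add_le_add (StmtFour.edist_getVert_le p (i - 1))
            (le_of_eq (SimpleGraph.edist_eq_one_iff_adj.mpr hadjk2))
        have b2 : C.contactGraph.edist ⟨hs N, hmem N le_rfl⟩
            ⟨hs k, hmem k hkN.le⟩ ≤ ((1 + (p.length - (i + 1)) : ℕ) : ℕ∞) := by
          rw [SimpleGraph.edist_comm]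
          refine le_trans (SimpleGraph.edist_triangle (v := p.getVert (i + 1))) ?_
          rw [Nat.cast_add, Nat.cast_one]
          exact add_le_add (le_of_eq (SimpleGraph.edist_eq_one_iff_adj.mpr hadjk1))
            (StmtFour.edist_getVert_right p (by omega))
        exact StmtFour.finish b1 b2 (by omega)
  · rw [SimpleGraph.edist_eq_top_of_not_reachable hreach]
    simp
end

section
/- Let g be an automorphism of a finite-dimensional CAT(0) cubical complex X and suppose there is a half-space h with g h ⊂ h and with h and g h strongly separated. Then d_CX(gⁿ ĥ, ĥ) ≥ n − 3 for all n ≥ 0; consequently the stable translation length of g on the contact graph CX is at least 1, so g acts loxodromically on CX. -/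
/-!
A combinatorial model of a finite-dimensional CAT(0) cubical complex:
the vertex set `V` together with its collection of half-spaces `HS ⊆ Set V`,
axiomatized as a pocset of subsets of `V` whose dual (Sageev) complex has
vertex set exactly `V`.
-/

open Set

variable {V : Type*}

namespace CubicalCpx

/-- `x` and `y` are vertices separated exactly by the hyperplane `{s, sᶜ}`. -/

def Straddle (C : CubicalCpx V) (x y : V) (s : Set V) : Prop :=
  (x ∈ s ↔ y ∉ s) ∧ ∀ m ∈ C.HS, m ≠ s → m ≠ sᶜ → (x ∈ m ↔ y ∈ m)

variable {C : CubicalCpx V}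

lemma ne_compl_self {s : Set V} (hs : s ∈ C.HS) : s ≠ sᶜ := by
  intro hEq
  obtain ⟨x, hx⟩ := (C.proper s hs).1
  exact (hEq ▸ hx) hx

lemma straddle_compl {x y : V} {s : Set V} (h : C.Straddle x y s) : C.Straddle x y sᶜ := by
  obtain ⟨h1, h2⟩ := h
  constructor
  · simp only [Set.mem_compl_iff, not_not]
    tauto
  · intro m hm hm1 hm2
    exact h2 m hm (fun hEq => hm2 (by rw [hEq, compl_compl])) hm1

lemma straddle_sameHyp {x y : V} {s t : Set V} (hst : SameHyp s t) (h : C.Straddle x y t) :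
    C.Straddle x y s := by
  rcases hst with rfl | rfl
  · exact h
  · have := straddle_compl h
    rwa [compl_compl] at this

lemma flip {x : V} {s : Set V} (hs : s ∈ C.HS) (hxs : x ∈ s)
    (hmin : ∀ m ∈ C.HS, x ∈ m → m ⊆ s → m = s) :
    ∃ y : V, C.Straddle x y s := by
  classical
  have hsc : sᶜ ∈ C.HS := C.compl_mem s hs
  have hsne : s ≠ sᶜ := ne_compl_self hs
  set ω : Set (Set V) := {m | m ∈ C.HS ∧ ((x ∈ m ∧ m ≠ s) ∨ m = sᶜ)} with hωdef
  have hωsub : ω ⊆ C.HS := fun m hm => hm.1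
  have hscω : sᶜ ∈ ω := ⟨hsc, Or.inr rfl⟩
  have hsω : s ∉ ω := by
    rintro ⟨-, ⟨-, hne⟩ | hEq⟩
    · exact hne rfl
    · exact hsne hEq
  have hmem : ∀ m, m ∈ C.HS → m ≠ s → m ≠ sᶜ → (m ∈ ω ↔ x ∈ m) := by
    intro m hm h1 h2
    constructor
    · rintro ⟨-, ⟨hx, -⟩ | hEq⟩
      · exact hx
      · exact absurd hEq h2
    · intro hx
      exact ⟨hm, Or.inl ⟨hx, h1⟩⟩
  have horient : ∀ m ∈ C.HS, m ∈ ω ↔ mᶜ ∉ ω := by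
    intro m hm
    by_cases h1 : m = s
    · subst h1
      exact iff_of_false hsω (by simp only [not_not]; exact hscω)
    · by_cases h2 : m = sᶜ
      · subst h2
        refine iff_of_true hscω ?_
        rw [compl_compl]
        exact hsω
      · have hmc : mᶜ ∈ C.HS := C.compl_mem m hm
        have h1c : mᶜ ≠ s := by
          intro hEq; apply h2; rw [← hEq, compl_compl]
        have h2c : mᶜ ≠ sᶜ := fun hEq => h1 (compl_injective hEq)
        rw [hmem m hm h1 h2, show (mᶜ ∉ ω) ↔ ¬ (x ∈ mᶜ) from not_congr (hmem mᶜ hmc h1c h2c)]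
        simp
  have hcons : ∀ a ∈ ω, ∀ b ∈ ω, (a ∩ b).Nonempty := by
    have key : ∀ a ∈ ω, a ≠ sᶜ → (a ∩ sᶜ).Nonempty := by
      rintro a ⟨ha, hae⟩ hanes
      rcases hae with ⟨hxa, hanesa⟩ | hEq
      · by_contra hemp
        rw [Set.not_nonempty_iff_eq_empty] at hemp
        have hsubs : a ⊆ s := by
          intro z hz
          by_contra hzs
          have hmem2 : z ∈ a ∩ sᶜ := ⟨hz, hzs⟩
          rw [hemp] at hmem2
          exact hmem2
        exact hanesa (hmin a ha hxa hsubs)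
      · exact absurd hEq hanes
    rintro a ha b hb
    by_cases ha' : a = sᶜ
    · by_cases hb' : b = sᶜ
      · subst ha'; subst hb'
        simpa using (C.proper sᶜ hsc).1
      · subst ha'
        rw [Set.inter_comm]
        exact key b hb hb'
    · by_cases hb' : b = sᶜ
      · subst hb'
        exact key a ha ha'
      · rcases ha with ⟨-, ⟨hxa, -⟩ | hEq⟩
        · rcases hb with ⟨-, ⟨hxb, -⟩ | hEq'⟩
          · exact ⟨x, hxa, hxb⟩
          · exact absurd hEq' hb'
        · exact absurd hEq ha'
  have hdcc : ∀ f : ℕ → Set V, (∀ n, f n ∈ ω) → (∀ n, f (n + 1) ⊆ f n) →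
      ∃ n, f (n + 1) = f n := by
    intro f hf hdesc
    have hmono : ∀ a b : ℕ, a ≤ b → f b ⊆ f a := by
      intro a b hab
      induction b with
      | zero =>
        have : a = 0 := Nat.le_zero.mp hab
        subst this; exact subset_rfl
      | succ k ih =>
        by_cases hk : a ≤ k
        · exact (hdesc k).trans (ih hk)
        · have : a = k + 1 := by omega
          subst this; exact subset_rfl
    by_cases hall : ∀ n, x ∈ f n
    · obtain ⟨y0, hy0⟩ := (C.proper (f 0) (hωsub (hf 0))).2
      have hsubS : ∀ n, f n ∈ {m ∈ C.HS | x ∈ m ∧ y0 ∉ m} := by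
        intro n
        exact ⟨hωsub (hf n), hall n, fun hy => hy0 (hmono 0 n (Nat.zero_le n) hy)⟩
      have hfin : {m ∈ C.HS | x ∈ m ∧ y0 ∉ m}.Finite := C.finite_sep x y0
      haveI := hfin.to_subtype
      obtain ⟨a, b, hab, hfab⟩ := Finite.exists_ne_map_eq_of_infinite
        (fun n : ℕ => (⟨f n, hsubS n⟩ : {m ∈ C.HS | x ∈ m ∧ y0 ∉ m}))
      have hfab' : f a = f b := congrArg Subtype.val hfab
      rcases Nat.lt_or_ge a b with hlt | hge
      · refine ⟨a, subset_antisymm (hdesc a) ?_⟩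
        rw [hfab']
        exact hmono (a+1) b hlt
      · have hba : b < a := lt_of_le_of_ne hge (Ne.symm hab)
        refine ⟨b, subset_antisymm (hdesc b) ?_⟩
        rw [← hfab']
        exact hmono (b+1) a hba
    · push_neg at hall
      obtain ⟨k, hk⟩ := hall
      have hfk : f k = sᶜ := by
        rcases hf k with ⟨-, ⟨hx, -⟩ | hEq⟩
        · exact absurd hx hk
        · exact hEq
      have hfk1 : f (k+1) = sᶜ := by
        rcases hf (k+1) with ⟨-, ⟨hx, -⟩ | hEq⟩
        · exfalso
          have hxsc : x ∈ sᶜ := by rw [← hfk]; exact hdesc k hx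
          exact hxsc hxs
        · exact hEq
      exact ⟨k, by rw [hfk, hfk1]⟩
  obtain ⟨y, hy⟩ := C.realized ω hωsub horient hcons hdcc
  have hys : y ∉ s := by
    intro hys
    have : s ∈ ω := by rw [hy]; exact ⟨hs, hys⟩
    exact hsω this
  refine ⟨y, iff_of_true hxs hys, ?_⟩
  intro m hm h1 h2
  have hyiff : m ∈ ω ↔ y ∈ m := by
    rw [hy]
    exact ⟨fun hmem' => hmem'.2, fun hym => ⟨hm, hym⟩⟩
  rw [← hmem m hm h1 h2, hyiff]



/-- One improvement step for the `corner` minimization. -/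
lemma corner_step {c d : Set V} (hc : c ∈ C.HS) (hd : d ∈ C.HS)
    (H1 : ∀ m ∈ C.HS, c ⊆ m → ¬ m ⊂ d)
    (H3 : ∀ m ∈ C.HS, cᶜ ⊂ m → ¬ m ⊂ d)
    {x : V} (hx : x ∈ c ∩ d) {m : Set V} (hm : m ∈ C.HS) (hxm : x ∈ m) (hmd : m ⊂ d) :
    ∃ y ∈ c ∩ d, ∃ m₀ ∈ C.HS, x ∈ m₀ ∧ m₀ ⊂ d ∧ y ∉ m₀ ∧ ¬ (m₀ᶜ ⊂ c) ∧ ¬ (m₀ᶜ ⊂ d) ∧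
      ∀ k ∈ C.HS, k ≠ m₀ → k ≠ m₀ᶜ → (x ∈ k ↔ y ∈ k) := by
  obtain ⟨wd, hwd⟩ := (C.proper d hd).2
  have hFsub : {k : Set V | k ∈ C.HS ∧ x ∈ k ∧ k ⊆ m} ⊆ {k ∈ C.HS | x ∈ k ∧ wd ∉ k} := by
    rintro k ⟨hk, hxk, hkm⟩
    exact ⟨hk, hxk, fun hw => hwd (hmd.subset (hkm hw))⟩
  have hFfin : {k : Set V | k ∈ C.HS ∧ x ∈ k ∧ k ⊆ m}.Finite := (C.finite_sep x wd).subset hFsub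
  have hFne : {k : Set V | k ∈ C.HS ∧ x ∈ k ∧ k ⊆ m}.Nonempty := ⟨m, hm, hxm, subset_rfl⟩
  obtain ⟨m₀, hm₀F, hm₀min⟩ := Set.Finite.exists_minimalFor id _ hFfin hFne
  obtain ⟨hm₀HS, hxm₀, hm₀m⟩ := hm₀F
  have hm₀d : m₀ ⊂ d := lt_of_le_of_lt hm₀m hmd
  have hminflip : ∀ k ∈ C.HS, x ∈ k → k ⊆ m₀ → k = m₀ := by
    intro k hk hxk hkm
    exact subset_antisymm hkm (hm₀min ⟨hk, hxk, hkm.trans hm₀m⟩ hkm)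
  obtain ⟨y, hstr⟩ := flip hm₀HS hxm₀ hminflip
  have hym₀ : y ∉ m₀ := hstr.1.mp hxm₀
  have hcne1 : c ≠ m₀ := by
    intro hEq
    exact H1 m hm (hEq ▸ hm₀m) hmd
  have hcne2 : c ≠ m₀ᶜ := by
    intro hEq
    have : x ∈ m₀ᶜ := hEq ▸ hx.1
    exact this hxm₀
  have hdne1 : d ≠ m₀ := fun hEq => hm₀d.ne (hEq.symm)
  have hdne2 : d ≠ m₀ᶜ := by
    intro hEq
    have : x ∈ m₀ᶜ := hEq ▸ hx.2
    exact this hxm₀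
  have hyc : y ∈ c := (hstr.2 c hc (fun hEq => hcne1 hEq) (fun hEq => hcne2 hEq)).mp hx.1
  have hyd : y ∈ d := (hstr.2 d hd (fun hEq => hdne1 hEq) (fun hEq => hdne2 hEq)).mp hx.2
  have hnc : ¬ (m₀ᶜ ⊂ c) := by
    intro hlt
    have hcc : cᶜ ⊂ m₀ := by
      rw [← compl_compl m₀]
      exact compl_lt_compl_iff_lt.mpr hlt
    exact H3 m₀ hm₀HS hcc hm₀d
  have hnd : ¬ (m₀ᶜ ⊂ d) := by
    intro hlt
    have hsub2 : dᶜ ⊆ m₀ := compl_subset_comm.mp hlt.subset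
    have : wd ∈ d := hm₀d.subset (hsub2 hwd)
    exact hwd this
  exact ⟨y, ⟨hyc, hyd⟩, m₀, hm₀HS, hxm₀, hm₀d, hym₀, hnc, hnd,
    fun k hk h1 h2 => hstr.2 k hk h1 h2⟩

lemma corner {c d : Set V} (hc : c ∈ C.HS) (hd : d ∈ C.HS) (hne : (c ∩ d).Nonempty)
    (H1 : ∀ m ∈ C.HS, c ⊆ m → ¬ m ⊂ d) (H1' : ∀ m ∈ C.HS, d ⊆ m → ¬ m ⊂ c)
    (H3 : ∀ m ∈ C.HS, cᶜ ⊂ m → ¬ m ⊂ d) (H3' : ∀ m ∈ C.HS, dᶜ ⊂ m → ¬ m ⊂ c) :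
    ∃ x ∈ c ∩ d, (∀ m ∈ C.HS, x ∈ m → ¬ m ⊂ c) ∧ (∀ m ∈ C.HS, x ∈ m → ¬ m ⊂ d) := by
  classical
  obtain ⟨wc, hwc⟩ := (C.proper c hc).2
  obtain ⟨wd, hwd⟩ := (C.proper d hd).2
  have hfinc : ∀ z : V, {k ∈ C.HS | z ∈ k ∧ k ⊂ c}.Finite := by
    intro z
    refine (C.finite_sep z wc).subset ?_
    rintro k ⟨hk, hzk, hkc⟩
    exact ⟨hk, hzk, fun hw => hwc (hkc.subset hw)⟩
  have hfind : ∀ z : V, {k ∈ C.HS | z ∈ k ∧ k ⊂ d}.Finite := by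
    intro z
    refine (C.finite_sep z wd).subset ?_
    rintro k ⟨hk, hzk, hkd⟩
    exact ⟨hk, hzk, fun hw => hwd (hkd.subset hw)⟩
  set P : V → ℕ := fun z =>
    {k ∈ C.HS | z ∈ k ∧ k ⊂ c}.ncard + {k ∈ C.HS | z ∈ k ∧ k ⊂ d}.ncard with hP
  have himg : (P '' (c ∩ d)).Nonempty := hne.image P
  obtain ⟨x, hxcd, hxP⟩ : ∃ x ∈ c ∩ d, P x = sInf (P '' (c ∩ d)) := by
    obtain ⟨x, hx1, hx2⟩ := Nat.sInf_mem himg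
    exact ⟨x, hx1, hx2⟩
  have hlow : ∀ y ∈ c ∩ d, ¬ P y < P x := by
    intro y hy hlt
    rw [hxP] at hlt
    have hle : sInf (P '' (c ∩ d)) ≤ P y := Nat.sInf_le (Set.mem_image_of_mem P hy)
    omega
  refine ⟨x, hxcd, ?_, ?_⟩
  · intro m hm hxm hmc
    obtain ⟨y, hycd, m₀, hm₀HS, hxm₀, hm₀c, hym₀, hn_d, hn_c, hagree⟩ :=
      corner_step hd hc H1' H3' ⟨hxcd.2, hxcd.1⟩ hm hxm hmc
    refine hlow y ⟨hycd.2, hycd.1⟩ ?_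
    have hsubc : {k ∈ C.HS | y ∈ k ∧ k ⊂ c} ⊆ {k ∈ C.HS | x ∈ k ∧ k ⊂ c} \ {m₀} := by
      rintro k ⟨hk, hyk, hkc⟩
      have hkne1 : k ≠ m₀ := fun hEq => hym₀ (hEq ▸ hyk)
      have hkne2 : k ≠ m₀ᶜ := fun hEq => hn_c (hEq ▸ hkc)
      exact ⟨⟨hk, (hagree k hk hkne1 hkne2).mpr hyk, hkc⟩, hkne1⟩
    have hsubd : {k ∈ C.HS | y ∈ k ∧ k ⊂ d} ⊆ {k ∈ C.HS | x ∈ k ∧ k ⊂ d} := by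
      rintro k ⟨hk, hyk, hkd⟩
      have hkne1 : k ≠ m₀ := fun hEq => hym₀ (hEq ▸ hyk)
      have hkne2 : k ≠ m₀ᶜ := fun hEq => hn_d (hEq ▸ hkd)
      exact ⟨hk, (hagree k hk hkne1 hkne2).mpr hyk, hkd⟩
    have hm₀mem : m₀ ∈ {k ∈ C.HS | x ∈ k ∧ k ⊂ c} := ⟨hm₀HS, hxm₀, hm₀c⟩
    have hlt1 : {k ∈ C.HS | y ∈ k ∧ k ⊂ c}.ncard < {k ∈ C.HS | x ∈ k ∧ k ⊂ c}.ncard := by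
      calc {k ∈ C.HS | y ∈ k ∧ k ⊂ c}.ncard
          ≤ ({k ∈ C.HS | x ∈ k ∧ k ⊂ c} \ {m₀}).ncard :=
            Set.ncard_le_ncard hsubc ((hfinc x).diff (t := {m₀}))
        _ < {k ∈ C.HS | x ∈ k ∧ k ⊂ c}.ncard :=
            Set.ncard_diff_singleton_lt_of_mem hm₀mem (hfinc x)
    have hle2 : {k ∈ C.HS | y ∈ k ∧ k ⊂ d}.ncard ≤ {k ∈ C.HS | x ∈ k ∧ k ⊂ d}.ncard :=
      Set.ncard_le_ncard hsubd (hfind x)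
    simp only [hP]
    omega
  · intro m hm hxm hmd
    obtain ⟨y, hycd, m₀, hm₀HS, hxm₀, hm₀d, hym₀, hn_c, hn_d, hagree⟩ :=
      corner_step hc hd H1 H3 hxcd hm hxm hmd
    refine hlow y hycd ?_
    have hsubd : {k ∈ C.HS | y ∈ k ∧ k ⊂ d} ⊆ {k ∈ C.HS | x ∈ k ∧ k ⊂ d} \ {m₀} := by
      rintro k ⟨hk, hyk, hkd⟩
      have hkne1 : k ≠ m₀ := fun hEq => hym₀ (hEq ▸ hyk)
      have hkne2 : k ≠ m₀ᶜ := fun hEq => hn_d (hEq ▸ hkd)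
      exact ⟨⟨hk, (hagree k hk hkne1 hkne2).mpr hyk, hkd⟩, hkne1⟩
    have hsubc : {k ∈ C.HS | y ∈ k ∧ k ⊂ c} ⊆ {k ∈ C.HS | x ∈ k ∧ k ⊂ c} := by
      rintro k ⟨hk, hyk, hkc⟩
      have hkne1 : k ≠ m₀ := fun hEq => hym₀ (hEq ▸ hyk)
      have hkne2 : k ≠ m₀ᶜ := fun hEq => hn_c (hEq ▸ hkc)
      exact ⟨hk, (hagree k hk hkne1 hkne2).mpr hyk, hkc⟩
    have hm₀mem : m₀ ∈ {k ∈ C.HS | x ∈ k ∧ k ⊂ d} := ⟨hm₀HS, hxm₀, hm₀d⟩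
    have hlt1 : {k ∈ C.HS | y ∈ k ∧ k ⊂ d}.ncard < {k ∈ C.HS | x ∈ k ∧ k ⊂ d}.ncard := by
      calc {k ∈ C.HS | y ∈ k ∧ k ⊂ d}.ncard
          ≤ ({k ∈ C.HS | x ∈ k ∧ k ⊂ d} \ {m₀}).ncard :=
            Set.ncard_le_ncard hsubd ((hfind x).diff (t := {m₀}))
        _ < {k ∈ C.HS | x ∈ k ∧ k ⊂ d}.ncard :=
            Set.ncard_diff_singleton_lt_of_mem hm₀mem (hfind x)
    have hle2 : {k ∈ C.HS | y ∈ k ∧ k ⊂ c}.ncard ≤ {k ∈ C.HS | x ∈ k ∧ k ⊂ c}.ncard :=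
      Set.ncard_le_ncard hsubc (hfinc x)
    simp only [hP]
    omega


/-- From the `corner` minimality, flip both walls. -/
lemma corner_straddles {c d : Set V} (hc : c ∈ C.HS) (hd : d ∈ C.HS) (hne : (c ∩ d).Nonempty)
    (H1 : ∀ m ∈ C.HS, c ⊆ m → ¬ m ⊂ d) (H1' : ∀ m ∈ C.HS, d ⊆ m → ¬ m ⊂ c)
    (H3 : ∀ m ∈ C.HS, cᶜ ⊂ m → ¬ m ⊂ d) (H3' : ∀ m ∈ C.HS, dᶜ ⊂ m → ¬ m ⊂ c) :
    ∃ x y z : V, C.Straddle x y c ∧ C.Straddle x z d := by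
  obtain ⟨x, hx, minc, mind⟩ := corner hc hd hne H1 H1' H3 H3'
  obtain ⟨y, hy⟩ := flip hc hx.1 (fun m hm hxm hms => by
    by_contra hne'
    exact minc m hm hxm (ssubset_of_subset_of_ne hms hne'))
  obtain ⟨z, hz⟩ := flip hd hx.2 (fun m hm hxm hms => by
    by_contra hne'
    exact mind m hm hxm (ssubset_of_subset_of_ne hms hne'))
  exact ⟨x, y, z, hy, hz⟩

lemma transverse_straddles {s t : Set V} (hs : s ∈ C.HS) (ht : t ∈ C.HS) (htr : Transverse s t) :
    ∃ x y z : V, C.Straddle x y s ∧ C.Straddle x z t := by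
  obtain ⟨h1, h2, h3, h4⟩ := htr
  refine corner_straddles hs ht h1 ?_ ?_ ?_ ?_
  · intro m hm hsm hmt
    obtain ⟨z, hz1, hz2⟩ := h3
    exact hz2 (hmt.subset (hsm hz1))
  · intro m hm htm hms
    obtain ⟨z, hz1, hz2⟩ := h2
    exact hz1 (hms.subset (htm hz2))
  · intro m hm h1' h2'
    obtain ⟨z, hz1, hz2⟩ := h4
    exact hz2 (h2'.subset (h1'.subset hz1))
  · intro m hm h1' h2'
    obtain ⟨z, hz1, hz2⟩ := h4
    exact hz1 (h2'.subset (h1'.subset hz2))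

lemma tightContact_straddles {s t : Set V} (hs : s ∈ C.HS) (ht : t ∈ C.HS)
    (htc : C.TightContact s t) : ∃ x y z : V, C.Straddle x y s ∧ C.Straddle x z t := by
  obtain ⟨a, b, hsa, htb, hab, htight⟩ := htc
  have ha : a ∈ C.HS := by
    rcases hsa with hEq | hEq
    · rw [hEq]; exact hs
    · rw [hEq]; exact C.compl_mem s hs
  have hb : b ∈ C.HS := by
    rcases htb with hEq | hEq
    · rw [hEq]; exact ht
    · rw [hEq]; exact C.compl_mem t ht
  have hac : aᶜ ∈ C.HS := C.compl_mem a ha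
  obtain ⟨w, hwb, hwa⟩ := exists_of_ssubset hab
  have hne : (aᶜ ∩ b).Nonempty := ⟨w, hwa, hwb⟩
  have H1 : ∀ m ∈ C.HS, aᶜ ⊆ m → ¬ m ⊂ b := by
    intro m hm h1 h2
    obtain ⟨z, hz⟩ := (C.proper b hb).2
    by_cases hza : z ∈ a
    · exact hz (hab.subset hza)
    · exact hz (h2.subset (h1 hza))
  have H1' : ∀ m ∈ C.HS, b ⊆ m → ¬ m ⊂ aᶜ := by
    intro m hm h1 h2
    obtain ⟨z, hz⟩ := (C.proper a ha).1
    exact (h2.subset (h1 (hab.subset hz))) hz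
  have H3 : ∀ m ∈ C.HS, aᶜᶜ ⊂ m → ¬ m ⊂ b := by
    intro m hm h1 h2
    rw [compl_compl] at h1
    rcases htight m hm h1.subset h2.subset with hEq | hEq
    · exact h1.ne' hEq
    · exact h2.ne hEq
  have H3' : ∀ m ∈ C.HS, bᶜ ⊂ m → ¬ m ⊂ aᶜ := by
    intro m hm h1 h2
    have hmc : mᶜ ∈ C.HS := C.compl_mem m hm
    have hsub1 : a ⊆ mᶜ := fun z hz hzm => (h2.subset hzm) hz
    have hsub2 : mᶜ ⊆ b := by
      intro z hz
      by_contra hzb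
      exact hz (h1.subset hzb)
    rcases htight mᶜ hmc hsub1 hsub2 with hEq | hEq
    · exact h2.ne (by rw [← hEq, compl_compl])
    · exact h1.ne (by rw [← hEq, compl_compl])
  obtain ⟨x, y, z, hy, hz⟩ := corner_straddles hac hb hne H1 H1' H3 H3'
  have s1 : C.Straddle x y a := by
    have := straddle_compl hy
    rwa [compl_compl] at this
  exact ⟨x, y, z, straddle_sameHyp hsa s1, straddle_sameHyp htb hz⟩

lemma adj_straddles {sv tv : C.HS} (hadj : C.contactGraph.Adj sv tv) :
    ∃ x y z : V, C.Straddle x y sv.1 ∧ C.Straddle x z tv.1 := by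
  obtain ⟨hns, hcase⟩ : ¬ SameHyp (sv.1 : Set V) tv.1 ∧ (Transverse (sv.1 : Set V) tv.1 ∨ C.TightContact sv.1 tv.1 ∨ C.TightContact tv.1 sv.1) := hadj
  rcases hcase with htr | htc | htc
  · exact transverse_straddles sv.2 tv.2 htr
  · exact tightContact_straddles sv.2 tv.2 htc
  · obtain ⟨x, y, z, h1, h2⟩ := tightContact_straddles tv.2 sv.2 htc
    exact ⟨x, z, y, h2, h1⟩

lemma straddle_cross {s k : Set V} (hkHS : k ∈ C.HS) {x y x' y' : V}
    (h1 : C.Straddle x y s) (h2 : C.Straddle x' y' s)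
    (hx : x ∈ k) (hx' : x' ∉ k) (hk1 : k ≠ s) (hk2 : k ≠ sᶜ) : Transverse s k := by
  have hy : y ∈ k := (h1.2 k hkHS hk1 hk2).mp hx
  have hy' : y' ∉ k := fun hyk => hx' ((h2.2 k hkHS hk1 hk2).mpr hyk)
  refine ⟨?_, ?_, ?_, ?_⟩
  · by_cases hxs : x ∈ s
    · exact ⟨x, hxs, hx⟩
    · have hys : y ∈ s := by
        by_contra hys
        exact hxs (h1.1.mpr hys)
      exact ⟨y, hys, hy⟩
  · by_cases hxs : x ∈ s
    · exact ⟨y, h1.1.mp hxs, hy⟩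
    · exact ⟨x, hxs, hx⟩
  · by_cases hxs : x' ∈ s
    · exact ⟨x', hxs, hx'⟩
    · have hys : y' ∈ s := by
        by_contra hys
        exact hxs (h2.1.mpr hys)
      exact ⟨y', hys, hy'⟩
  · by_cases hxs : x' ∈ s
    · exact ⟨y', h2.1.mp hxs, hy'⟩
    · exact ⟨x', hxs, hx'⟩

lemma exists_dual_edge {s : Set V} (hs : s ∈ C.HS) :
    ∃ x y : V, C.Straddle x y s ∧ x ∈ s := by
  have hne : (s ∩ s).Nonempty := by simpa using (C.proper s hs).1
  have H1 : ∀ m ∈ C.HS, s ⊆ m → ¬ m ⊂ s := by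
    intro m hm h1 h2
    exact h2.ne (subset_antisymm h2.subset h1)
  have H3 : ∀ m ∈ C.HS, sᶜ ⊂ m → ¬ m ⊂ s := by
    intro m hm h1 h2
    obtain ⟨z, hz⟩ := (C.proper s hs).2
    exact hz (h2.subset (h1.subset hz))
  obtain ⟨x, hx, minc, -⟩ := corner hs hs hne H1 H1 H3 H3
  obtain ⟨y, hy⟩ := flip hs hx.1 (fun m hm hxm hms => by
    by_contra hne'
    exact minc m hm hxm (ssubset_of_subset_of_ne hms hne'))
  exact ⟨x, y, hy, hx.1⟩

lemma image_inv_image (f : Equiv.Perm V) (s : Set V) : ⇑f '' (⇑f⁻¹ '' s) = s := by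
  rw [← Set.image_comp]
  ext z
  simp

lemma inv_image_image (f : Equiv.Perm V) (s : Set V) : ⇑f⁻¹ '' (⇑f '' s) = s := by
  rw [← Set.image_comp]
  ext z
  simp

lemma inv_mem (g : Equiv.Perm V) (hHS : ∀ s ∈ C.HS, ⇑g '' s ∈ C.HS) :
    ∀ s ∈ C.HS, ⇑g⁻¹ '' s ∈ C.HS := by
  intro s hs
  obtain ⟨x, y, hstr, hxs⟩ := exists_dual_edge hs
  have hys : y ∉ s := hstr.1.mp hxs
  have hne : g⁻¹ x ≠ g⁻¹ y := by
    intro hEq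
    apply hys
    have hxy : x = y := by
      have := congrArg g hEq
      simpa using this
    rwa [← hxy]
  obtain ⟨m₀, hm₀, hx₀, hy₀⟩ := C.sep _ _ hne
  have hgm : ⇑g '' m₀ ∈ C.HS := hHS m₀ hm₀
  have hxgm : x ∈ ⇑g '' m₀ := ⟨g⁻¹ x, hx₀, by simp⟩
  have hygm : y ∉ ⇑g '' m₀ := by
    rintro ⟨z, hz, hzy⟩
    apply hy₀
    have hzeq : z = g⁻¹ y := by rw [← hzy]; simp
    rwa [← hzeq]
  have hEqs : ⇑g '' m₀ = s := by
    by_contra hne1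
    by_cases hne2 : ⇑g '' m₀ = sᶜ
    · rw [hne2] at hxgm
      exact hxgm hxs
    · exact hygm ((hstr.2 _ hgm hne1 hne2).mp hxgm)
  rw [← hEqs, inv_image_image]
  exact hm₀

lemma transverse_image (f : Equiv.Perm V) {a b : Set V} :
    Transverse (⇑f '' a) (⇑f '' b) ↔ Transverse a b := by
  have hc : ∀ s : Set V, (⇑f '' s)ᶜ = ⇑f '' sᶜ := fun s => (Set.image_compl_eq f.bijective).symm
  unfold Transverse
  rw [hc, hc, ← Set.image_inter f.injective, ← Set.image_inter f.injective,
    ← Set.image_inter f.injective, ← Set.image_inter f.injective]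
  simp [Set.image_nonempty]

lemma transverse_compl_left {a k : Set V} (h : Transverse a k) : Transverse aᶜ k := by
  obtain ⟨h1, h2, h3, h4⟩ := h
  refine ⟨h2, ?_, h4, ?_⟩ <;> rwa [compl_compl]

lemma image_ssubset (f : Equiv.Perm V) {a b : Set V} (h : a ⊂ b) : ⇑f '' a ⊂ ⇑f '' b := by
  rw [Set.ssubset_iff_subset_ne] at h ⊢
  exact ⟨Set.image_mono h.1, fun hEq => h.2 (Set.image_injective.mpr f.injective hEq)⟩

lemma interval_finite {a b : Set V} (ha : a ∈ C.HS) (hb : b ∈ C.HS) :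
    {l | l ∈ C.HS ∧ a ⊂ l ∧ l ⊂ b}.Finite := by
  obtain ⟨x, hx⟩ := (C.proper a ha).1
  obtain ⟨y, hy⟩ := (C.proper b hb).2
  refine (C.finite_sep x y).subset ?_
  rintro l ⟨hl, h1, h2⟩
  exact ⟨hl, h1.subset hx, fun hyl => hy (h2.subset hyl)⟩

lemma adj_of_no_between {a b : Set V} (ha : a ∈ C.HS) (hb : b ∈ C.HS) (hab : a ⊂ b)
    (hempty : ∀ l ∈ C.HS, ¬ (a ⊂ l ∧ l ⊂ b)) :
    C.contactGraph.Adj ⟨a, ha⟩ ⟨b, hb⟩ := by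
  show ¬ SameHyp a b ∧ (Transverse a b ∨ C.TightContact a b ∨ C.TightContact b a)
  refine ⟨?_, ?_⟩
  · rintro (hEq | hEq)
    · exact hab.ne hEq.symm
    · obtain ⟨z, hz⟩ := (C.proper a ha).1
      have hzb : z ∈ b := hab.subset hz
      have hEq' : b = aᶜ := hEq
      rw [hEq'] at hzb
      exact hzb hz
  · refine Or.inr (Or.inl ⟨a, b, Or.inl rfl, Or.inl rfl, hab, ?_⟩)
    intro l hl h1 h2
    by_contra hcon
    push_neg at hcon
    exact hempty l hl ⟨ssubset_of_subset_of_ne h1 (Ne.symm hcon.1),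
      ssubset_of_subset_of_ne h2 hcon.2⟩

lemma reachable_of_ssubset_aux (N : ℕ) : ∀ {a b : Set V} (ha : a ∈ C.HS) (hb : b ∈ C.HS),
    a ⊂ b → {l | l ∈ C.HS ∧ a ⊂ l ∧ l ⊂ b}.ncard ≤ N →
    C.contactGraph.Reachable ⟨a, ha⟩ ⟨b, hb⟩ := by
  induction N with
  | zero =>
    intro a b ha hb hab hcard
    have hfin := interval_finite ha hb
    have hempty : {l | l ∈ C.HS ∧ a ⊂ l ∧ l ⊂ b} = ∅ :=
      (Set.ncard_eq_zero hfin).mp (Nat.le_zero.mp hcard)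
    refine (adj_of_no_between ha hb hab ?_).reachable
    intro l hl hcon
    have : l ∈ {l | l ∈ C.HS ∧ a ⊂ l ∧ l ⊂ b} := ⟨hl, hcon⟩
    rw [hempty] at this
    exact this
  | succ N ih =>
    intro a b ha hb hab hcard
    by_cases hI : {l | l ∈ C.HS ∧ a ⊂ l ∧ l ⊂ b}.Nonempty
    · have hfin := interval_finite ha hb
      obtain ⟨l, hlI, hlmin⟩ := Set.Finite.exists_minimalFor id _ hfin hI
      have hl := hlI.1
      have hadj : C.contactGraph.Adj ⟨a, ha⟩ ⟨l, hl⟩ := by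
        refine adj_of_no_between ha hl hlI.2.1 ?_
        intro k hk hcon
        have hkI : k ∈ {l | l ∈ C.HS ∧ a ⊂ l ∧ l ⊂ b} := ⟨hk, hcon.1, hcon.2.trans hlI.2.2⟩
        exact hcon.2.ne (subset_antisymm hcon.2.subset (hlmin hkI hcon.2.subset))
      have hsub : {k | k ∈ C.HS ∧ l ⊂ k ∧ k ⊂ b} ⊆ {k | k ∈ C.HS ∧ a ⊂ k ∧ k ⊂ b} \ {l} := by
        rintro k ⟨hk, h1, h2⟩
        exact ⟨⟨hk, hlI.2.1.trans h1, h2⟩, fun hEq => h1.ne' (by simpa using hEq)⟩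
      have hcard' : {k | k ∈ C.HS ∧ l ⊂ k ∧ k ⊂ b}.ncard ≤ N := by
        have hlt : ({k | k ∈ C.HS ∧ a ⊂ k ∧ k ⊂ b} \ {l}).ncard <
            {k | k ∈ C.HS ∧ a ⊂ k ∧ k ⊂ b}.ncard :=
          Set.ncard_diff_singleton_lt_of_mem hlI hfin
        have hle := Set.ncard_le_ncard hsub (hfin.diff (t := {l}))
        omega
      exact hadj.reachable.trans (ih hl hb hlI.2.2 hcard')
    · rw [Set.not_nonempty_iff_eq_empty] at hI
      refine (adj_of_no_between ha hb hab ?_).reachable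
      intro l hl hcon
      have : l ∈ {l | l ∈ C.HS ∧ a ⊂ l ∧ l ⊂ b} := ⟨hl, hcon⟩
      rw [hI] at this
      exact this

lemma reachable_of_ssubset {a b : Set V} (ha : a ∈ C.HS) (hb : b ∈ C.HS) (hab : a ⊂ b) :
    C.contactGraph.Reachable ⟨a, ha⟩ ⟨b, hb⟩ :=
  reachable_of_ssubset_aux _ ha hb hab le_rfl

lemma adj_image (g : Equiv.Perm V) (hHS : ∀ s ∈ C.HS, ⇑g '' s ∈ C.HS)
    {sv tv : C.HS} (hadj : C.contactGraph.Adj sv tv) :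
    C.contactGraph.Adj ⟨⇑g '' sv.1, hHS _ sv.2⟩ ⟨⇑g '' tv.1, hHS _ tv.2⟩ := by
  have hinv := inv_mem g hHS
  obtain ⟨hns, hcase⟩ : ¬ SameHyp (sv.1 : Set V) tv.1 ∧ (Transverse (sv.1 : Set V) tv.1 ∨ C.TightContact sv.1 tv.1 ∨ C.TightContact tv.1 sv.1) := hadj
  have hsame : ∀ u v : Set V, SameHyp (⇑g '' u) (⇑g '' v) → SameHyp u v := by
    intro u v hsv
    rcases hsv with hEq | hEq
    · exact Or.inl (Set.image_injective.mpr g.injective hEq)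
    · refine Or.inr (Set.image_injective.mpr g.injective ?_)
      rw [hEq, Set.image_compl_eq g.bijective]
  have htc_image : ∀ u v : Set V, C.TightContact u v → C.TightContact (⇑g '' u) (⇑g '' v) := by
    rintro u v ⟨a, b, hua, hvb, hab, htight⟩
    refine ⟨⇑g '' a, ⇑g '' b, ?_, ?_, image_ssubset g hab, ?_⟩
    · rcases hua with hEq | hEq
      · rw [hEq]; exact Or.inl rfl
      · rw [hEq]; exact Or.inr (Set.image_compl_eq g.bijective)
    · rcases hvb with hEq | hEq
      · rw [hEq]; exact Or.inl rfl
      · rw [hEq]; exact Or.inr (Set.image_compl_eq g.bijective)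
    · intro l hl h1 h2
      have hl' : ⇑g⁻¹ '' l ∈ C.HS := hinv l hl
      have h1' : a ⊆ ⇑g⁻¹ '' l := by
        intro z hz
        exact ⟨g z, h1 ⟨z, hz, rfl⟩, by simp⟩
      have h2' : ⇑g⁻¹ '' l ⊆ b := by
        rintro - ⟨z, hz, rfl⟩
        obtain ⟨w, hw, hwz⟩ := h2 hz
        have hzeq : g⁻¹ z = w := by rw [← hwz]; simp
        rw [hzeq]
        exact hw
      rcases htight _ hl' h1' h2' with hEq | hEq
      · left; rw [← hEq, image_inv_image]
      · right; rw [← hEq, image_inv_image]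
  refine ⟨fun hsv => hns (hsame _ _ hsv), ?_⟩
  rcases hcase with htr | htc | htc
  · exact Or.inl ((transverse_image g).mpr htr)
  · exact Or.inr (Or.inl (htc_image _ _ htc))
  · exact Or.inr (Or.inr (htc_image _ _ htc))

lemma edist_image_le (g : Equiv.Perm V) (hHS : ∀ s ∈ C.HS, ⇑g '' s ∈ C.HS) (u v : C.HS) :
    C.contactGraph.edist ⟨⇑g '' u.1, hHS _ u.2⟩ ⟨⇑g '' v.1, hHS _ v.2⟩ ≤
      C.contactGraph.edist u v := by
  by_cases htop : C.contactGraph.edist u v = ⊤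
  · rw [htop]; exact le_top
  obtain ⟨p, hp⟩ := SimpleGraph.exists_walk_of_edist_ne_top htop
  let φ : C.contactGraph →g C.contactGraph :=
    ⟨fun sv => ⟨⇑g '' sv.1, hHS _ sv.2⟩, fun hadj => adj_image g hHS hadj⟩
  have hle := SimpleGraph.edist_le (p.map φ)
  rwa [SimpleGraph.Walk.length_map, hp] at hle

lemma pow_image_mem (g : Equiv.Perm V) (hHS : ∀ s ∈ C.HS, ⇑g '' s ∈ C.HS) (m : ℕ) :
    ∀ s ∈ C.HS, ⇑(g ^ m) '' s ∈ C.HS := by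
  induction m with
  | zero => intro s hs; simpa using hs
  | succ k ih =>
    intro s hs
    have hEq : ⇑(g ^ (k+1)) '' s = ⇑g '' (⇑(g ^ k) '' s) := by
      rw [pow_succ', Equiv.Perm.coe_mul, Set.image_comp]
    rw [hEq]
    exact hHS _ (ih s hs)

lemma edist_image_pow_le (g : Equiv.Perm V) (hHS : ∀ s ∈ C.HS, ⇑g '' s ∈ C.HS) (m : ℕ)
    (u v : C.HS) :
    C.contactGraph.edist ⟨⇑(g ^ m) '' u.1, pow_image_mem g hHS m _ u.2⟩
      ⟨⇑(g ^ m) '' v.1, pow_image_mem g hHS m _ v.2⟩ ≤ C.contactGraph.edist u v := by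
  induction m with
  | zero =>
    have h1 : (⟨⇑(g ^ 0) '' u.1, pow_image_mem g hHS 0 _ u.2⟩ : C.HS) = u := by
      apply Subtype.ext
      simp
    have h2 : (⟨⇑(g ^ 0) '' v.1, pow_image_mem g hHS 0 _ v.2⟩ : C.HS) = v := by
      apply Subtype.ext
      simp
    rw [h1, h2]
  | succ k ih =>
    have h1 : (⟨⇑(g ^ (k+1)) '' u.1, pow_image_mem g hHS (k+1) _ u.2⟩ : C.HS) =
        ⟨⇑g '' (⇑(g ^ k) '' u.1), hHS _ (pow_image_mem g hHS k _ u.2)⟩ :=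
      Subtype.ext (show (⇑(g ^ (k+1)) '' u.1 : Set V) = ⇑g '' (⇑(g ^ k) '' u.1) from by
        rw [pow_succ', Equiv.Perm.coe_mul, Set.image_comp])
    have h2 : (⟨⇑(g ^ (k+1)) '' v.1, pow_image_mem g hHS (k+1) _ v.2⟩ : C.HS) =
        ⟨⇑g '' (⇑(g ^ k) '' v.1), hHS _ (pow_image_mem g hHS k _ v.2)⟩ :=
      Subtype.ext (show (⇑(g ^ (k+1)) '' v.1 : Set V) = ⇑g '' (⇑(g ^ k) '' v.1) from by
        rw [pow_succ', Equiv.Perm.coe_mul, Set.image_comp])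
    rw [h1, h2]
    exact le_trans (edist_image_le g hHS ⟨⇑(g ^ k) '' u.1, pow_image_mem g hHS k _ u.2⟩
      ⟨⇑(g ^ k) '' v.1, pow_image_mem g hHS k _ v.2⟩) ih

lemma walk_ge (H : ℕ → Set V) (hmem : ∀ i, H i ∈ C.HS)
    (hstrict : ∀ i j, i < j → H j ⊂ H i)
    (hSS : ∀ i j, i < j → ∀ l ∈ C.HS, ¬ (Transverse l (H i) ∧ Transverse l (H j)))
    (n : ℕ) (w : C.contactGraph.Walk ⟨H n, hmem n⟩ ⟨H 0, hmem 0⟩) :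
    n ≤ w.length := by
  classical
  rcases Nat.eq_zero_or_pos n with rfl | hn
  · exact Nat.zero_le _
  have hd1 : 1 ≤ w.length := by
    rcases Nat.eq_zero_or_pos w.length with h0 | h1
    · exfalso
      have hEq := SimpleGraph.Walk.eq_of_length_eq_zero h0
      have hEq' : H n = H 0 := congrArg Subtype.val hEq
      exact (hstrict 0 n hn).ne hEq'
    · exact h1
  set d := w.length with hd
  have hex : ∀ k, k < d → ∃ p : V × V × V,
      C.Straddle p.1 p.2.1 (w.getVert k).1 ∧ C.Straddle p.1 p.2.2 (w.getVert (k+1)).1 := by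
    intro k hk
    obtain ⟨x, y, z, h1, h2⟩ := adj_straddles (w.adj_getVert_succ hk)
    exact ⟨⟨x, y, z⟩, h1, h2⟩
  choose F hF1 hF2 using hex
  obtain ⟨x0, -⟩ := (C.proper (H 0) (hmem 0)).1
  set X : ℕ → V := fun k => if hk : k < d then (F k hk).1 else x0 with hX
  have hX1 : ∀ k (hk : k < d), C.Straddle (X k) (F k hk).2.1 (w.getVert k).1 := by
    intro k hk
    simp only [hX, dif_pos hk]
    exact hF1 k hk
  have hX2 : ∀ k (hk : k < d), C.Straddle (X k) (F k hk).2.2 (w.getVert (k+1)).1 := by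
    intro k hk
    simp only [hX, dif_pos hk]
    exact hF2 k hk
  have hHne : ∀ i j, i < j → H i ≠ H j := fun i j hij => (hstrict i j hij).ne'
  have hHnc : ∀ i j, i < j → H i ≠ (H j)ᶜ := by
    intro i j hij hEq
    obtain ⟨z, hz⟩ := (C.proper (H j) (hmem j)).1
    have hzi : z ∈ H i := (hstrict i j hij).subset hz
    rw [hEq] at hzi
    exact hzi hz
  have hHnc' : ∀ i j, i < j → H j ≠ (H i)ᶜ := by
    intro i j hij hEq
    obtain ⟨z, hz⟩ := (C.proper (H j) (hmem j)).1
    have hzi : z ∈ H i := (hstrict i j hij).subset hz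
    rw [hEq] at hz
    exact hz hzi
  have hstart : ∀ i, i < n → X 0 ∈ H i := by
    intro i hi
    have h0d : 0 < d := hd1
    have hstr := hX1 0 h0d
    have hv0 : (w.getVert 0).1 = H n := by rw [w.getVert_zero]
    rw [hv0] at hstr
    by_cases hXn : X 0 ∈ H n
    · exact (hstrict i n hi).subset hXn
    · have hyn : (F 0 h0d).2.1 ∈ H n := by
        by_contra hyn
        exact hXn (hstr.1.mpr hyn)
      have hyi : (F 0 h0d).2.1 ∈ H i := (hstrict i n hi).subset hyn
      exact (hstr.2 (H i) (hmem i) (hHne i n hi) (hHnc i n hi)).mpr hyi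
  have hend : ∀ i, 1 ≤ i → X (d-1) ∉ H i := by
    intro i hi
    have hdlt : d - 1 < d := by omega
    have hstr := hX2 (d-1) hdlt
    have hsucc : d - 1 + 1 = d := by omega
    rw [hsucc] at hstr
    have hvd : (w.getVert d).1 = H 0 := by rw [hd, w.getVert_length]
    rw [hvd] at hstr
    intro hXi
    have hX0 : X (d-1) ∈ H 0 := (hstrict 0 i hi).subset hXi
    have hz0 : (F (d-1) hdlt).2.2 ∉ H 0 := hstr.1.mp hX0
    have hzi : (F (d-1) hdlt).2.2 ∈ H i :=
      (hstr.2 (H i) (hmem i) (hHne 0 i hi).symm (hHnc' 0 i hi)).mp hXi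
    exact hz0 ((hstrict 0 i hi).subset hzi)
  have hcross : ∀ i, 1 ≤ i → i < n → ∃ k, 1 ≤ k ∧ k ≤ d - 1 ∧ X (k-1) ∈ H i ∧ X k ∉ H i := by
    intro i h1i hin
    have hP : ∃ k, k ≤ d - 1 ∧ X k ∉ H i := ⟨d-1, le_refl _, hend i h1i⟩
    obtain ⟨hk0le, hk0mem⟩ := Nat.find_spec hP
    have hk0pos : 1 ≤ Nat.find hP := by
      rcases Nat.eq_zero_or_pos (Nat.find hP) with h0 | h1
      · exfalso
        rw [h0] at hk0mem
        exact hk0mem (hstart i hin)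
      · exact h1
    refine ⟨Nat.find hP, hk0pos, hk0le, ?_, hk0mem⟩
    by_contra hnot
    have hlt : Nat.find hP - 1 < Nat.find hP := by omega
    exact Nat.find_min hP hlt ⟨by omega, hnot⟩
  choose κ hκ1 hκ2 hκ3 hκ4 using hcross
  set f : ℕ → ℕ := fun i => if hi : 1 ≤ i ∧ i < n then κ i hi.1 hi.2 else 0 with hf
  have hmaps : ∀ i ∈ Finset.Icc 1 (n-1), f i ∈ Finset.Icc 1 (d-1) := by
    intro i hiI
    rw [Finset.mem_Icc] at hiI
    have hi : 1 ≤ i ∧ i < n := ⟨hiI.1, by omega⟩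
    simp only [hf, dif_pos hi]
    rw [Finset.mem_Icc]
    exact ⟨hκ1 i hi.1 hi.2, hκ2 i hi.1 hi.2⟩
  have key : ∀ i j, 1 ≤ i → i < n → 1 ≤ j → j < n → i < j → f i = f j → False := by
    intro i j h1 h2 h3 h4 hij hfEq
    have hi' : 1 ≤ i ∧ i < n := ⟨h1, h2⟩
    have hj' : 1 ≤ j ∧ j < n := ⟨h3, h4⟩
    have hfi : f i = κ i h1 h2 := by simp only [hf, dif_pos hi']
    have hfj : f j = κ j h3 h4 := by simp only [hf, dif_pos hj']
    set k := κ i h1 h2 with hkdef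
    have hkj : κ j h3 h4 = k := by rw [← hfj, ← hfEq, hfi]
    have hk1 : 1 ≤ k := hκ1 i h1 h2
    have hk2 : k ≤ d - 1 := hκ2 i h1 h2
    have hXi1 : X (k-1) ∈ H i := hκ3 i h1 h2
    have hXi2 : X k ∉ H i := hκ4 i h1 h2
    have hXj1 : X (k-1) ∈ H j := by have := hκ3 j h3 h4; rwa [hkj] at this
    have hXj2 : X k ∉ H j := by have := hκ4 j h3 h4; rwa [hkj] at this
    have hkd : k < d := by omega
    have hkd' : k - 1 < d := by omega
    have hstr1 := hX2 (k-1) hkd'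
    have hksucc : k - 1 + 1 = k := by omega
    rw [hksucc] at hstr1
    have hstr2 := hX1 k hkd
    have hsHS : (w.getVert k).1 ∈ C.HS := (w.getVert k).2
    have hntr : ¬ Transverse (H i) (H j) := by
      rintro ⟨-, h2', -, -⟩
      obtain ⟨z, hz1, hz2⟩ := h2'
      exact hz1 ((hstrict i j hij).subset hz2)
    by_cases hi_s : H i = (w.getVert k).1 ∨ H i = ((w.getVert k).1)ᶜ
    · by_cases hj_s : H j = (w.getVert k).1 ∨ H j = ((w.getVert k).1)ᶜ
      · rcases hi_s with hEq1 | hEq1 <;> rcases hj_s with hEq2 | hEq2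
        · exact hHne i j hij (hEq1.trans hEq2.symm)
        · exact hHnc' i j hij (by rw [hEq2, hEq1])
        · exact hHnc i j hij (by rw [hEq1, hEq2])
        · exact hHne i j hij (hEq1.trans hEq2.symm)
      · push_neg at hj_s
        have htr : Transverse (w.getVert k).1 (H j) :=
          straddle_cross (hmem j) hstr1 hstr2 hXj1 hXj2 hj_s.1 hj_s.2
        rcases hi_s with hEq1 | hEq1
        · exact hntr (hEq1 ▸ htr)
        · have htr2 : Transverse ((w.getVert k).1)ᶜ (H j) := transverse_compl_left htr
          exact hntr (hEq1 ▸ htr2)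
    · push_neg at hi_s
      have htr_i : Transverse (w.getVert k).1 (H i) :=
        straddle_cross (hmem i) hstr1 hstr2 hXi1 hXi2 hi_s.1 hi_s.2
      by_cases hj_s : H j = (w.getVert k).1 ∨ H j = ((w.getVert k).1)ᶜ
      · rcases hj_s with hEq2 | hEq2
        · exact hntr (Transverse.symm (hEq2 ▸ htr_i))
        · have htr2 : Transverse ((w.getVert k).1)ᶜ (H i) := transverse_compl_left htr_i
          exact hntr (Transverse.symm (hEq2 ▸ htr2))
      · push_neg at hj_s
        have htr_j : Transverse (w.getVert k).1 (H j) :=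
          straddle_cross (hmem j) hstr1 hstr2 hXj1 hXj2 hj_s.1 hj_s.2
        exact hSS i j hij _ hsHS ⟨htr_i, htr_j⟩
  have hinj : Set.InjOn f (Finset.Icc 1 (n-1)) := by
    intro i hiI j hjI hEq
    by_contra hne
    rw [Finset.coe_Icc, Set.mem_Icc] at hiI hjI
    rcases lt_trichotomy i j with hlt | hEq' | hlt
    · exact key i j hiI.1 (by omega) hjI.1 (by omega) hlt hEq
    · exact hne hEq'
    · exact key j i hjI.1 (by omega) hiI.1 (by omega) hlt hEq.symm
  have hcard := Finset.card_le_card_of_injOn f hmaps hinj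
  rw [Nat.card_Icc, Nat.card_Icc] at hcard
  omega


end CubicalCpx

open Filter in
/-- If `g` is an automorphism of `X` and `h` is a half-space
with `g h ⊂ h` strongly separated from `h`, then `d_CX(gⁿ ĥ, ĥ) ≥ n - 3` for
all `n`, and consequently the stable translation length of `g` on the contact
graph exists and is at least `1`, so `g` is loxodromic on the contact graph. -/
theorem stmt6 (C : CubicalCpx V) (g : Equiv.Perm V)
    (hHS : ∀ s ∈ C.HS, ⇑g '' s ∈ C.HS)
    (h : Set V) (hh : h ∈ C.HS)
    (hpow : ∀ n : ℕ, ⇑(g ^ n) '' h ∈ C.HS)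
    (hsub : ⇑g '' h ⊂ h)
    (hss : C.StronglySeparated (⇑g '' h) h) :
    (∀ n : ℕ, (n : ℕ∞) ≤
        C.contactGraph.edist ⟨⇑(g ^ n) '' h, hpow n⟩ ⟨h, hh⟩ + 3) ∧
    ∃ L : ℝ, 1 ≤ L ∧
      Tendsto (fun n : ℕ =>
          ((C.contactGraph.edist ⟨⇑(g ^ n) '' h, hpow n⟩ ⟨h, hh⟩).toNat : ℝ) / n)
        atTop (nhds L) := by
  classical
  have hinv := CubicalCpx.inv_mem (C := C) g hHS
  have hstep : ∀ i : ℕ, ⇑(g ^ (i+1)) '' h ⊂ ⇑(g ^ i) '' h := by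
    intro i
    have hEq : ⇑(g ^ (i+1)) '' h = ⇑(g ^ i) '' (⇑g '' h) := by
      rw [pow_succ, Equiv.Perm.coe_mul, Set.image_comp]
    rw [hEq]
    exact CubicalCpx.image_ssubset (g ^ i) hsub
  have hmono : ∀ i j : ℕ, i ≤ j → ⇑(g ^ j) '' h ⊆ ⇑(g ^ i) '' h := by
    intro i j hij
    induction j with
    | zero =>
      have h0 : i = 0 := Nat.le_zero.mp hij
      subst h0; exact subset_rfl
    | succ k ih =>
      by_cases hk : i ≤ k
      · exact (hstep k).subset.trans (ih hk)
      · have hik : i = k + 1 := by omega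
        subst hik; exact subset_rfl
  have hstrict : ∀ i j : ℕ, i < j → ⇑(g ^ j) '' h ⊂ ⇑(g ^ i) '' h := by
    intro i j hij
    exact ssubset_of_subset_of_ssubset (hmono (i+1) j hij) (hstep i)
  have hinvpow : ∀ (k : ℕ) (s : Set V), s ∈ C.HS → ⇑(g ^ k)⁻¹ '' s ∈ C.HS := by
    intro k
    induction k with
    | zero => intro s hs; simpa using hs
    | succ m ih =>
      intro s hs
      have hEq : ⇑(g ^ (m+1))⁻¹ '' s = ⇑(g ^ m)⁻¹ '' (⇑g⁻¹ '' s) := by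
        rw [pow_succ', mul_inv_rev, Equiv.Perm.coe_mul, Set.image_comp]
      rw [hEq]
      exact ih _ (hinv s hs)
  have hSS : ∀ i j : ℕ, i < j → ∀ l ∈ C.HS,
      ¬ (Transverse l (⇑(g ^ i) '' h) ∧ Transverse l (⇑(g ^ j) '' h)) := by
    rintro i j hij l hl ⟨hti, htj⟩
    have hti1 : Transverse l (⇑(g ^ (i+1)) '' h) := by
      obtain ⟨a1, a2, a3, a4⟩ := htj
      obtain ⟨b1, b2, b3, b4⟩ := hti
      have hsub1 : ⇑(g ^ j) '' h ⊆ ⇑(g ^ (i+1)) '' h := hmono (i+1) j hij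
      have hsub2 : ⇑(g ^ (i+1)) '' h ⊆ ⇑(g ^ i) '' h := (hstep i).subset
      refine ⟨?_, ?_, ?_, ?_⟩
      · obtain ⟨z, hz1, hz2⟩ := a1
        exact ⟨z, hz1, hsub1 hz2⟩
      · obtain ⟨z, hz1, hz2⟩ := a2
        exact ⟨z, hz1, hsub1 hz2⟩
      · obtain ⟨z, hz1, hz2⟩ := b3
        exact ⟨z, hz1, fun hmem' => hz2 (hsub2 hmem')⟩
      · obtain ⟨z, hz1, hz2⟩ := b4
        exact ⟨z, hz1, fun hmem' => hz2 (hsub2 hmem')⟩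
    have hl0 : ⇑(g ^ i)⁻¹ '' l ∈ C.HS := hinvpow i l hl
    have hrecl : ⇑(g ^ i) '' (⇑(g ^ i)⁻¹ '' l) = l := CubicalCpx.image_inv_image (g ^ i) l
    have ht1 : Transverse (⇑(g ^ i)⁻¹ '' l) (⇑g '' h) := by
      refine (CubicalCpx.transverse_image (g ^ i)).mp ?_
      rw [hrecl]
      have hEq : ⇑(g ^ i) '' (⇑g '' h) = ⇑(g ^ (i+1)) '' h := by
        rw [pow_succ, Equiv.Perm.coe_mul, Set.image_comp]
      rw [hEq]
      exact hti1
    have ht0 : Transverse (⇑(g ^ i)⁻¹ '' l) h := by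
      refine (CubicalCpx.transverse_image (g ^ i)).mp ?_
      rw [hrecl]
      exact hti
    exact hss.2 _ hl0 ⟨ht1, ht0⟩
  have hv0 : (⟨⇑(g ^ 0) '' h, hpow 0⟩ : C.HS) = ⟨h, hh⟩ :=
    Subtype.ext (show ⇑(g ^ 0) '' h = h from by simp)
  have hcore : ∀ n : ℕ, (n : ℕ∞) ≤
      C.contactGraph.edist ⟨⇑(g ^ n) '' h, hpow n⟩ ⟨h, hh⟩ := by
    intro n
    by_cases htop : C.contactGraph.edist ⟨⇑(g ^ n) '' h, hpow n⟩ ⟨h, hh⟩ = ⊤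
    · rw [htop]; exact le_top
    obtain ⟨p, hp⟩ := SimpleGraph.exists_walk_of_edist_ne_top htop
    have hlen := CubicalCpx.walk_ge (fun i => ⇑(g ^ i) '' h) hpow hstrict hSS n
      (p.copy rfl hv0.symm)
    rw [SimpleGraph.Walk.length_copy] at hlen
    calc (n : ℕ∞) ≤ (p.length : ℕ∞) := by exact_mod_cast hlen
      _ = _ := hp
  have hreach : ∀ n : ℕ, C.contactGraph.Reachable ⟨⇑(g ^ n) '' h, hpow n⟩ ⟨h, hh⟩ := by
    intro n
    induction n with
    | zero =>
      rw [hv0]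
    | succ k ih =>
      exact (CubicalCpx.reachable_of_ssubset (hpow (k+1)) (hpow k) (hstep k)).trans ih
  have hfin : ∀ n : ℕ, C.contactGraph.edist ⟨⇑(g ^ n) '' h, hpow n⟩ ⟨h, hh⟩ ≠ ⊤ :=
    fun n => SimpleGraph.edist_ne_top_iff_reachable.mpr (hreach n)
  have hsubE : ∀ m n : ℕ,
      C.contactGraph.edist ⟨⇑(g ^ (m+n)) '' h, hpow (m+n)⟩ ⟨h, hh⟩ ≤
      C.contactGraph.edist ⟨⇑(g ^ m) '' h, hpow m⟩ ⟨h, hh⟩ +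
      C.contactGraph.edist ⟨⇑(g ^ n) '' h, hpow n⟩ ⟨h, hh⟩ := by
    intro m n
    have htri := SimpleGraph.edist_triangle (G := C.contactGraph)
      (u := ⟨⇑(g ^ (m+n)) '' h, hpow (m+n)⟩) (v := ⟨⇑(g ^ m) '' h, hpow m⟩) (w := ⟨h, hh⟩)
    have hmid : C.contactGraph.edist ⟨⇑(g ^ (m+n)) '' h, hpow (m+n)⟩ ⟨⇑(g ^ m) '' h, hpow m⟩ ≤
        C.contactGraph.edist ⟨⇑(g ^ n) '' h, hpow n⟩ ⟨h, hh⟩ := by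
      have hEq1 : (⟨⇑(g ^ (m+n)) '' h, hpow (m+n)⟩ : C.HS) =
          ⟨⇑(g ^ m) '' (⇑(g ^ n) '' h), CubicalCpx.pow_image_mem g hHS m _ (hpow n)⟩ :=
        Subtype.ext (show ⇑(g ^ (m+n)) '' h = ⇑(g ^ m) '' (⇑(g ^ n) '' h) from by
          rw [pow_add, Equiv.Perm.coe_mul, Set.image_comp])
      have hEq2 : (⟨⇑(g ^ m) '' h, hpow m⟩ : C.HS) =
          ⟨⇑(g ^ m) '' h, CubicalCpx.pow_image_mem g hHS m _ hh⟩ := rfl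
      rw [hEq1, hEq2]
      exact CubicalCpx.edist_image_pow_le g hHS m ⟨⇑(g ^ n) '' h, hpow n⟩ ⟨h, hh⟩
    refine le_trans htri (le_trans (add_le_add_left hmid _) ?_)
    rw [add_comm]
  have hgrow : ∀ n : ℕ,
      n ≤ (C.contactGraph.edist ⟨⇑(g ^ n) '' h, hpow n⟩ ⟨h, hh⟩).toNat := by
    intro n
    have hle := ENat.toNat_le_toNat (hcore n) (hfin n)
    simpa using hle
  have husub : Subadditive (fun n : ℕ =>
      ((C.contactGraph.edist ⟨⇑(g ^ n) '' h, hpow n⟩ ⟨h, hh⟩).toNat : ℝ)) := by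
    intro m n
    have h1 := hsubE m n
    have h2 : (C.contactGraph.edist ⟨⇑(g ^ (m+n)) '' h, hpow (m+n)⟩ ⟨h, hh⟩).toNat ≤
        (C.contactGraph.edist ⟨⇑(g ^ m) '' h, hpow m⟩ ⟨h, hh⟩).toNat +
        (C.contactGraph.edist ⟨⇑(g ^ n) '' h, hpow n⟩ ⟨h, hh⟩).toNat := by
      have hne : C.contactGraph.edist ⟨⇑(g ^ m) '' h, hpow m⟩ ⟨h, hh⟩ +
          C.contactGraph.edist ⟨⇑(g ^ n) '' h, hpow n⟩ ⟨h, hh⟩ ≠ ⊤ := by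
        intro hEq
        rcases WithTop.add_eq_top.mp hEq with hc | hc
        · exact hfin m hc
        · exact hfin n hc
      have hle := ENat.toNat_le_toNat h1 hne
      rwa [ENat.toNat_add (hfin m) (hfin n)] at hle
    beta_reduce
    exact_mod_cast h2
  have hbdd : BddBelow (Set.range fun n : ℕ =>
      ((C.contactGraph.edist ⟨⇑(g ^ n) '' h, hpow n⟩ ⟨h, hh⟩).toNat : ℝ) / n) := by
    refine ⟨0, ?_⟩
    rintro x ⟨n, rfl⟩
    positivity
  refine ⟨fun n => le_trans (hcore n) le_self_add, husub.lim, ?_, husub.tendsto_lim hbdd⟩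
  rw [Subadditive.lim]
  show (1:ℝ) ≤ sInf ((fun n : ℕ =>
      ((C.contactGraph.edist ⟨⇑(g ^ n) '' h, hpow n⟩ ⟨h, hh⟩).toNat : ℝ) / n) '' Set.Ici 1)
  apply le_csInf
  · exact ⟨_, Set.mem_image_of_mem _ (Set.mem_Ici.mpr (le_refl 1))⟩
  · rintro b ⟨m, hm, rfl⟩
    rw [Set.mem_Ici] at hm
    have hm0 : (0:ℝ) < (m:ℝ) := by
      have : 0 < m := by omega
      exact_mod_cast this
    rw [one_le_div hm0]
    exact_mod_cast hgrow m
end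

section
/- (Median box lemma) Let X be a finite-dimensional CAT(0) cubical complex with Roller compactification X̄ and median map m. Fix o ∈ X and x, y, z ∈ X̄, and set m₁ = m(o,z,y), m₂ = m(o,z,x), m₃ = m(o,m₁,m₂), m₄ = m(o,x,y). Suppose there is a pair of strongly separated half-spaces h₁ ⊂ h₂ with z, m₂ ∈ h₁ and o, m₃ ∈ h₂*. Then m₁ = m₃ = m₄. -/
/-!
The Roller compactification of a CAT(0) cubical complex, modeled via
ultrafilters on the pocset of half-spaces (subsets of the vertex set `V`).
-/

open Set

variable {V : Type*}

/-- `h` and `k` are strongly separated (w.r.t. the half-space collection `𝓗`):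
they are parallel and no half-space of `𝓗` is transverse to both. -/
def StronglySeparated (𝓗 : Set (Set V)) (h k : Set V) : Prop :=
  ¬ Transverse h k ∧ ∀ l ∈ 𝓗, ¬ (Transverse l h ∧ Transverse l k)

/-- A point of the Roller compactification: a consistent total ultrafilter on
the half-space collection `𝓗`. -/
def IsPoint (𝓗 : Set (Set V)) (U : Set (Set V)) : Prop :=
  U ⊆ 𝓗 ∧ (∀ h ∈ 𝓗, h ∈ U ↔ hᶜ ∉ U) ∧ ∀ h ∈ U, ∀ k ∈ U, (h ∩ k).Nonempty

/-- the median of three points of the Roller compactification, given by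
`U_{m(a,b,c)} = (U_a ∩ U_b) ∪ (U_b ∩ U_c) ∪ (U_c ∩ U_a)` -/
def med (A B C : Set (Set V)) : Set (Set V) := (A ∩ B) ∪ (B ∩ C) ∪ (C ∩ A)

private lemma med_aux1 (a b c d : Prop) (h : (b ↔ d) ∨ (a ↔ c)) :
    (((a ∧ d) ∨ (d ∧ c)) ∨ (c ∧ a)) ↔
      ((a ∧ (((a ∧ d) ∨ (d ∧ c)) ∨ (c ∧ a))) ∨
        ((((a ∧ d) ∨ (d ∧ c)) ∨ (c ∧ a)) ∧ (((a ∧ d) ∨ (d ∧ b)) ∨ (b ∧ a)))) ∨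
        ((((a ∧ d) ∨ (d ∧ b)) ∨ (b ∧ a)) ∧ a) := by
  tauto

private lemma med_aux2 (a b c d : Prop) (h : (b ↔ d) ∨ (a ↔ c)) :
    (((a ∧ (((a ∧ d) ∨ (d ∧ c)) ∨ (c ∧ a))) ∨
        ((((a ∧ d) ∨ (d ∧ c)) ∨ (c ∧ a)) ∧ (((a ∧ d) ∨ (d ∧ b)) ∨ (b ∧ a)))) ∨
        ((((a ∧ d) ∨ (d ∧ b)) ∨ (b ∧ a)) ∧ a)) ↔
      (((a ∧ b) ∨ (b ∧ c)) ∨ (c ∧ a)) := by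
  tauto

/-- median box lemma.  Fix points `o, x, y, z` of the Roller
compactification, and set `m₁ = m(o,z,y)`, `m₂ = m(o,z,x)`, `m₃ = m(o,m₁,m₂)`,
`m₄ = m(o,x,y)`.  If there is a pair of strongly separated half-spaces
`h₁ ⊂ h₂` with `z, m₂ ∈ h₁` and `o, m₃ ∈ h₂ᶜ`, then `m₁ = m₃ = m₄`. -/
theorem stmt8 (𝓗 : Set (Set V)) (hcompl : ∀ h ∈ 𝓗, hᶜ ∈ 𝓗)
    (Uo Ux Uy Uz : Set (Set V))
    (ho : IsPoint 𝓗 Uo) (hx : IsPoint 𝓗 Ux) (hy : IsPoint 𝓗 Uy)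
    (hz : IsPoint 𝓗 Uz)
    (h₁ h₂ : Set V) (h₁m : h₁ ∈ 𝓗) (h₂m : h₂ ∈ 𝓗) (h₁₂ : h₁ ⊂ h₂)
    (hss : StronglySeparated 𝓗 h₁ h₂)
    (hz₁ : h₁ ∈ Uz) (hm₂ : h₁ ∈ med Uo Uz Ux)
    (ho₂ : h₂ᶜ ∈ Uo) (hm₃ : h₂ᶜ ∈ med Uo (med Uo Uz Uy) (med Uo Uz Ux)) :
    med Uo Uz Uy = med Uo (med Uo Uz Uy) (med Uo Uz Ux) ∧
    med Uo (med Uo Uz Uy) (med Uo Uz Ux) = med Uo Ux Uy := by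
  obtain ⟨hoS, hoT, hoC⟩ := ho
  obtain ⟨hxS, hxT, hxC⟩ := hx
  obtain ⟨hyS, hyT, hyC⟩ := hy
  obtain ⟨hzS, hzT, hzC⟩ := hz
  have hsub : h₁ ⊆ h₂ := h₁₂.1
  have hdisj : h₁ ∩ h₂ᶜ = ∅ := by
    ext v; simp only [mem_inter_iff, mem_compl_iff, mem_empty_iff_false, iff_false, not_and,
      not_not]
    exact fun hv => hsub hv
  -- h₁ ∉ Uo
  have h1o : h₁ ∉ Uo := fun h => by
    have := hoC h₁ h h₂ᶜ ho₂
    rw [hdisj] at this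
    exact not_nonempty_empty this
  -- h₁ ∈ Ux
  have h1x : h₁ ∈ Ux := by
    rcases hm₂ with (⟨h, _⟩ | ⟨_, h⟩) | ⟨h, _⟩
    · exact absurd h h1o
    · exact h
    · exact h
  -- h₂ᶜ ∉ Uz and h₂ᶜ ∉ Ux
  have h2z : h₂ᶜ ∉ Uz := fun h => by
    have := hzC h₁ hz₁ h₂ᶜ h
    rw [hdisj] at this
    exact not_nonempty_empty this
  have h2x : h₂ᶜ ∉ Ux := fun h => by
    have := hxC h₁ h1x h₂ᶜ h
    rw [hdisj] at this
    exact not_nonempty_empty this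
  -- h₂ᶜ ∈ Uy
  have h2y : h₂ᶜ ∈ Uy := by
    have h2m2 : h₂ᶜ ∉ med Uo Uz Ux := by
      rintro ((⟨_, h⟩ | ⟨h, _⟩) | ⟨h, _⟩)
      · exact h2z h
      · exact h2z h
      · exact h2x h
    have h2m1 : h₂ᶜ ∈ med Uo Uz Uy := by
      rcases hm₃ with (⟨_, h⟩ | ⟨h, h'⟩) | ⟨h, _⟩
      · exact h
      · exact h
      · exact absurd h h2m2
    rcases h2m1 with (⟨_, h⟩ | ⟨h, h'⟩) | ⟨h, _⟩
    · exact absurd h h2z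
    · exact absurd h h2z
    · exact h
  -- key: no half-space separates both {x,z} and {o,y}
  have key : ∀ k ∈ 𝓗, (k ∈ Ux ↔ k ∈ Uz) ∨ (k ∈ Uo ↔ k ∈ Uy) := by
    intro k hk
    by_contra hcon
    push_neg at hcon
    obtain ⟨hxz, hoy⟩ := hcon
    have hkc : kᶜ ∈ 𝓗 := hcompl k hk
    have t1 : (k ∩ h₁).Nonempty ∧ (kᶜ ∩ h₁).Nonempty := by
      rcases hxz with ⟨hb, hd⟩ | ⟨hb, hd⟩
      · have hdc : kᶜ ∈ Uz := by
          by_contra h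
          exact hd ((hzT k hk).mpr h)
        exact ⟨hxC k hb h₁ h1x, hzC kᶜ hdc h₁ hz₁⟩
      · have hbc : kᶜ ∈ Ux := by
          by_contra h
          exact hb ((hxT k hk).mpr h)
        exact ⟨hzC k hd h₁ hz₁, hxC kᶜ hbc h₁ h1x⟩
    have t2 : (k ∩ h₂ᶜ).Nonempty ∧ (kᶜ ∩ h₂ᶜ).Nonempty := by
      rcases hoy with ⟨ha, hc⟩ | ⟨ha, hc⟩
      · have hcc : kᶜ ∈ Uy := by
          by_contra h
          exact hc ((hyT k hk).mpr h)
        exact ⟨hoC k ha h₂ᶜ ho₂, hyC kᶜ hcc h₂ᶜ h2y⟩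
      · have hac : kᶜ ∈ Uo := by
          by_contra h
          exact ha ((hoT k hk).mpr h)
        exact ⟨hyC k hc h₂ᶜ h2y, hoC kᶜ hac h₂ᶜ ho₂⟩
    have hsubc : h₂ᶜ ⊆ h₁ᶜ := compl_subset_compl.mpr hsub
    have T1 : Transverse k h₁ :=
      ⟨t1.1, t1.2, t2.1.mono (inter_subset_inter_right k hsubc),
        t2.2.mono (inter_subset_inter_right kᶜ hsubc)⟩
    have T2 : Transverse k h₂ :=
      ⟨t1.1.mono (inter_subset_inter_right k hsub), t1.2.mono (inter_subset_inter_right kᶜ hsub),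
        t2.1, t2.2⟩
    exact hss.2 k hk ⟨T1, T2⟩
  constructor
  · ext k
    by_cases hk : k ∈ 𝓗
    · simp only [med, mem_union, mem_inter_iff]
      exact med_aux1 (k ∈ Uo) (k ∈ Ux) (k ∈ Uy) (k ∈ Uz) (key k hk)
    · have ka : k ∉ Uo := fun h => hk (hoS h)
      have kb : k ∉ Ux := fun h => hk (hxS h)
      have kc : k ∉ Uy := fun h => hk (hyS h)
      have kd : k ∉ Uz := fun h => hk (hzS h)
      simp only [med, mem_union, mem_inter_iff]
      tauto
  · ext k
    by_cases hk : k ∈ 𝓗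
    · simp only [med, mem_union, mem_inter_iff]
      exact med_aux2 (k ∈ Uo) (k ∈ Ux) (k ∈ Uy) (k ∈ Uz) (key k hk)
    · have ka : k ∉ Uo := fun h => hk (hoS h)
      have kb : k ∉ Ux := fun h => hk (hxS h)
      have kc : k ∉ Uy := fun h => hk (hyS h)
      have kd : k ∉ Uz := fun h => hk (hzS h)
      simp only [med, mem_union, mem_inter_iff]
      tauto
end
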